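/- arXiv:2405.06069 — 8 statements merged into one kernel-verified Lean document; each statement's English description precedes it below -/
import Mathlib

section
/- Fekete's criterion: If all contiguous minors of A of order at most k are positive, then A is TP_k (all minors of order at most k are positive). -/
open Matrix

open Matrix

/-- `A` is totally positive: every minor (with strictly increasing row and
column index selections) is positive. -/
def IsTP {α β : Type} [LinearOrder α] [LinearOrder β] (A : Matrix α β ℝ) : Prop :=
  ∀ (l : ℕ) (r : Fin l → α) (c : Fin l → β), StrictMono r → StrictMono c →
    0 < (A.submatrix r c).det

/-- `A` is `TP_k`: every minor of order at most `k` is positive. -/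
def IsTPk {α β : Type} [LinearOrder α] [LinearOrder β] (A : Matrix α β ℝ) (k : ℕ) : Prop :=
  ∀ (l : ℕ), l ≤ k → ∀ (r : Fin l → α) (c : Fin l → β), StrictMono r → StrictMono c →
    0 < (A.submatrix r c).det

/-- `k`-subsets of `{1,…,n}`, encoded as strictly increasing tuples. -/
abbrev STuple (n k : ℕ) : Type := {f : Fin k → Fin n // StrictMono f}

noncomputable instance lexPi {n k : ℕ} : LinearOrder (Lex (Fin k → Fin n)) :=
  @Pi.Lex.linearOrder (Fin k) (fun _ => Fin n) _
    Finite.to_wellFoundedLT _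

/-- The lexicographic linear order on `k`-subsets. -/
noncomputable instance {n k : ℕ} : LinearOrder (STuple n k) :=
  LinearOrder.lift' (fun s => toLex s.1) (fun _ _ h => Subtype.ext (congrArg ofLex h))

/-- The `k`-th compound matrix of `A`: the matrix of all `k×k` minors of `A`,
rows and columns indexed by `k`-subsets ordered lexicographically. -/
noncomputable def compound {n : ℕ} (A : Matrix (Fin n) (Fin n) ℝ) (k : ℕ) :
    Matrix (STuple n k) (STuple n k) ℝ :=
  fun s t => (A.submatrix s.1 t.1).det

/-- The `k`-th Dodgson condensation matrix of `A`: the `(n-k) × (n-k)` matrix of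
contiguous minors of order `k+1` (0-indexed positions). -/
noncomputable def Dmat {n : ℕ} (A : Matrix (Fin n) (Fin n) ℝ) (k : ℕ) :
    Matrix (Fin (n - k)) (Fin (n - k)) ℝ :=
  fun i j =>
    (A.submatrix
      (fun p : Fin (k + 1) => (⟨i.1 + p.1, by have := i.2; have := p.2; omega⟩ : Fin n))
      (fun p : Fin (k + 1) => (⟨j.1 + p.1, by have := j.2; have := p.2; omega⟩ : Fin n))).det

/-- The contiguous minor of `A` of order `sz` with top-left position `(i, j)`
(0-indexed): `det A[{i,…,i+sz-1},{j,…,j+sz-1}]`. -/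
noncomputable def cminor {n : ℕ} (A : Matrix (Fin n) (Fin n) ℝ) (sz i j : ℕ)
    (hi : i + sz ≤ n) (hj : j + sz ≤ n) : ℝ :=
  (A.submatrix (fun p : Fin sz => (⟨i + p.1, by have := p.2; omega⟩ : Fin n))
               (fun p : Fin sz => (⟨j + p.1, by have := p.2; omega⟩ : Fin n))).det

/-- bordered determinant -/
noncomputable def bdet {ι : Type} [Fintype ι] [DecidableEq ι]
    (E : Matrix ι ι ℝ) (b : ι → ℝ) (c : ι → ℝ) (d : ℝ) : ℝ :=
  (Matrix.fromBlocks E (fun r (_ : Unit) => b r) (fun (_ : Unit) cc => c cc)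
    (fun _ _ => d)).det

lemma bdet_eq {ι : Type} [Fintype ι] [DecidableEq ι]
    (E : Matrix ι ι ℝ) [Invertible E] (b c : ι → ℝ) (d : ℝ) :
    bdet E b c d = E.det * (d - ∑ x, ∑ y, c x * (⅟E) x y * b y) := by
  rw [bdet, Matrix.det_fromBlocks₁₁ E (fun r (_ : Unit) => b r) (fun (_ : Unit) cc => c cc) (fun _ _ => d)]
  congr 1
  rw [Matrix.det_unique]
  change (Matrix.of (fun (_ : Unit) (_ : Unit) => d) - Matrix.of (fun (_ : Unit) cc => c cc) * ⅟E *
    Matrix.of (fun r (_ : Unit) => b r)) default default = _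
  simp [Matrix.sub_apply, Matrix.mul_apply, Finset.sum_mul, Finset.mul_sum]
  rw [Finset.sum_comm]

lemma sylv {ι : Type} [Fintype ι] [DecidableEq ι]
    (E : Matrix ι ι ℝ) (B : Matrix ι (Fin 2) ℝ) (C : Matrix (Fin 2) ι ℝ)
    (D : Matrix (Fin 2) (Fin 2) ℝ) (hE : IsUnit E.det) :
    (Matrix.fromBlocks E B C D).det * E.det =
      bdet E (fun r => B r 0) (fun c => C 0 c) (D 0 0) *
        bdet E (fun r => B r 1) (fun c => C 1 c) (D 1 1) -
      bdet E (fun r => B r 1) (fun c => C 0 c) (D 0 1) *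
        bdet E (fun r => B r 0) (fun c => C 1 c) (D 1 0) := by
  letI := E.invertibleOfIsUnitDet hE
  rw [Matrix.det_fromBlocks₁₁]
  have hS : ∀ i j, (D - C * ⅟E * B) i j = D i j - ∑ x, ∑ y, C i x * (⅟E) x y * B y j := by
    intro i j
    simp [Matrix.sub_apply, Matrix.mul_apply, Finset.sum_mul]
    rw [Finset.sum_comm]
  rw [Matrix.det_fin_two, bdet_eq, bdet_eq, bdet_eq, bdet_eq, hS, hS, hS, hS]
  ring

lemma det_submatrix_pair {ι κ : Type} [Fintype ι] [DecidableEq ι] [Fintype κ] [DecidableEq κ]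
    (e f : ι ≃ κ) (P Q : Matrix κ κ ℝ) :
    (P.submatrix e f).det * (Q.submatrix f e).det = P.det * Q.det := by
  have h1 : P.submatrix ⇑e ⇑f = (P.submatrix e e).submatrix id ⇑(f.trans e.symm) := by
    ext i j; simp
  have h2 : Q.submatrix ⇑f ⇑e = (Q.submatrix f f).submatrix id ⇑(e.trans f.symm) := by
    ext i j; simp
  rw [h1, h2, Matrix.det_permute', Matrix.det_permute', Matrix.det_submatrix_equiv_self,
    Matrix.det_submatrix_equiv_self]
  have h3 : (e.trans f.symm : Equiv.Perm ι) = (f.trans e.symm : Equiv.Perm ι)⁻¹ := by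
    ext x; rfl
  rw [h3, Equiv.Perm.sign_inv]
  set s := Equiv.Perm.sign (f.trans e.symm : Equiv.Perm ι)
  have hs : ((s : ℤ) : ℝ) * ((s : ℤ) : ℝ) = 1 := by
    have := Int.units_mul_self s
    norm_cast
    rw [this]; rfl
  push_cast
  linear_combination P.det * Q.det * hs

/-- the sum-of-two equiv used for the full matrix -/
noncomputable def eFull (n : ℕ) : (Fin n ⊕ Fin 2) ≃ Fin (n + 2) :=
  Equiv.ofBijective
    (Sum.elim (fun i : Fin n => i.succ.castSucc)
      (fun j : Fin 2 => if j = 0 then (0 : Fin (n + 2)) else Fin.last (n + 1)))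
    (by
      rw [Fintype.bijective_iff_injective_and_card]
      constructor
      · rintro (a | a) (b | b) h <;>
          simp only [Sum.elim_inl, Sum.elim_inr] at h
        · simp only [Fin.ext_iff, Fin.coe_castSucc, Fin.val_succ] at h
          exact congrArg Sum.inl (Fin.ext (by omega))
        · exfalso
          rcases Fin.eq_zero_or_eq_succ b with rfl | ⟨c, rfl⟩
          · simp only [if_pos rfl] at h
            exact absurd (congrArg Fin.val h) (by simp)
          · rw [if_neg (Fin.succ_ne_zero c)] at h
            have := congrArg Fin.val h
            simp [Fin.last] at this
            omega
        · exfalso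
          rcases Fin.eq_zero_or_eq_succ a with rfl | ⟨c, rfl⟩
          · simp only [if_pos rfl] at h
            exact absurd (congrArg Fin.val h).symm (by simp)
          · rw [if_neg (Fin.succ_ne_zero c)] at h
            have := congrArg Fin.val h
            simp [Fin.last] at this
            omega
        · congr 1
          rcases Fin.eq_zero_or_eq_succ a with rfl | ⟨c, rfl⟩ <;>
            rcases Fin.eq_zero_or_eq_succ b with rfl | ⟨d, rfl⟩
          · rfl
          · rw [if_pos rfl, if_neg (Fin.succ_ne_zero d)] at h
            exact absurd (congrArg Fin.val h) (by simp [Fin.last])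
          · rw [if_pos rfl, if_neg (Fin.succ_ne_zero c)] at h
            exact absurd (congrArg Fin.val h).symm (by simp [Fin.last])
          · exact congrArg Fin.succ (Subsingleton.elim c d)
      · simp)

/-- border equiv: interior shifted by one, extra element at 0 -/
noncomputable def eLo (n : ℕ) : (Fin n ⊕ Unit) ≃ Fin (n + 1) :=
  Equiv.ofBijective (Sum.elim (fun i : Fin n => i.succ) (fun _ => 0))
    (by
      rw [Fintype.bijective_iff_injective_and_card]
      constructor
      · rintro (a | a) (b | b) h <;> simp only [Sum.elim_inl, Sum.elim_inr] at h
        · exact congrArg Sum.inl (Fin.succ_injective _ h)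
        · exact absurd h (Fin.succ_ne_zero a)
        · exact absurd h.symm (Fin.succ_ne_zero b)
        · rfl
      · simp)

/-- border equiv: interior castSucc, extra element at last -/
noncomputable def eHi (n : ℕ) : (Fin n ⊕ Unit) ≃ Fin (n + 1) :=
  Equiv.ofBijective (Sum.elim (fun i : Fin n => i.castSucc) (fun _ => Fin.last n))
    (by
      rw [Fintype.bijective_iff_injective_and_card]
      constructor
      · rintro (a | a) (b | b) h <;> simp only [Sum.elim_inl, Sum.elim_inr] at h
        · exact congrArg Sum.inl (Fin.castSucc_injective _ h)
        · exact absurd h (Fin.castSucc_lt_last a).ne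
        · exact absurd h.symm (Fin.castSucc_lt_last b).ne
        · rfl
      · simp)

lemma desnanot {n : ℕ} (M : Matrix (Fin (n + 2)) (Fin (n + 2)) ℝ)
    (hE : IsUnit ((M.submatrix (fun i : Fin n => i.succ.castSucc)
      (fun i : Fin n => i.succ.castSucc)).det)) :
    M.det * (M.submatrix (fun i : Fin n => i.succ.castSucc)
        (fun i : Fin n => i.succ.castSucc)).det =
      (M.submatrix Fin.castSucc Fin.castSucc).det * (M.submatrix Fin.succ Fin.succ).det -
      (M.submatrix Fin.castSucc Fin.succ).det * (M.submatrix Fin.succ Fin.castSucc).det := by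
  set E : Matrix (Fin n) (Fin n) ℝ :=
    M.submatrix (fun i : Fin n => i.succ.castSucc) (fun i : Fin n => i.succ.castSucc) with hEdef
  set g : Fin 2 → Fin (n + 2) := fun j => if j = 0 then 0 else Fin.last (n + 1) with hg
  set Bb : Matrix (Fin n) (Fin 2) ℝ := fun i j => M i.succ.castSucc (g j) with hBb
  set Cb : Matrix (Fin 2) (Fin n) ℝ := fun i j => M (g i) j.succ.castSucc with hCb
  set Db : Matrix (Fin 2) (Fin 2) ℝ := fun i j => M (g i) (g j) with hDb
  have hfull : Matrix.fromBlocks E Bb Cb Db = M.submatrix (eFull n) (eFull n) := by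
    ext i j
    rcases i with i | i <;> rcases j with j | j <;>
      simp [Matrix.fromBlocks, eFull, hEdef, hBb, hCb, hDb, hg]
  have h00 : Matrix.fromBlocks E (fun r (_ : Unit) => Bb r 0) (fun (_ : Unit) c => Cb 0 c)
      (fun _ _ => Db 0 0) = (M.submatrix Fin.castSucc Fin.castSucc).submatrix (eLo n) (eLo n) := by
    ext i j
    rcases i with i | i <;> rcases j with j | j <;>
      simp [Matrix.fromBlocks, eLo, hEdef, hBb, hCb, hDb, hg]
  have h11 : Matrix.fromBlocks E (fun r (_ : Unit) => Bb r 1) (fun (_ : Unit) c => Cb 1 c)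
      (fun _ _ => Db 1 1) = (M.submatrix Fin.succ Fin.succ).submatrix (eHi n) (eHi n) := by
    ext i j
    rcases i with i | i <;> rcases j with j | j <;>
      simp [Matrix.fromBlocks, eHi, hEdef, hBb, hCb, hDb, hg, Fin.succ_last]
  have h01 : Matrix.fromBlocks E (fun r (_ : Unit) => Bb r 1) (fun (_ : Unit) c => Cb 0 c)
      (fun _ _ => Db 0 1) = (M.submatrix Fin.castSucc Fin.succ).submatrix (eLo n) (eHi n) := by
    ext i j
    rcases i with i | i <;> rcases j with j | j <;>
      simp [Matrix.fromBlocks, eLo, eHi, hEdef, hBb, hCb, hDb, hg,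
        Fin.succ_last]
  have h10 : Matrix.fromBlocks E (fun r (_ : Unit) => Bb r 0) (fun (_ : Unit) c => Cb 1 c)
      (fun _ _ => Db 1 0) = (M.submatrix Fin.succ Fin.castSucc).submatrix (eHi n) (eLo n) := by
    ext i j
    rcases i with i | i <;> rcases j with j | j <;>
      simp [Matrix.fromBlocks, eLo, eHi, hEdef, hBb, hCb, hDb, hg,
        Fin.succ_last]
  have key := sylv E Bb Cb Db hE
  rw [hfull] at key
  rw [Matrix.det_submatrix_equiv_self] at key
  unfold bdet at key
  rw [h00, h11, h01, h10] at key
  rw [Matrix.det_submatrix_equiv_self, Matrix.det_submatrix_equiv_self] at key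
  rw [key]
  congr 1
  exact det_submatrix_pair (eLo n) (eHi n) _ _

lemma det_unit_row {L : ℕ} (N : Matrix (Fin (L + 1)) (Fin (L + 1)) ℝ) (t : Fin (L + 1))
    (h : ∀ j, N (Fin.last L) j = if j = t then 1 else 0) :
    N.det = (-1) ^ (L + (t : ℕ)) * (N.submatrix Fin.castSucc t.succAbove).det := by
  rw [Matrix.det_succ_row N (Fin.last L)]
  rw [Finset.sum_eq_single t]
  · rw [h t, if_pos rfl, Fin.succAbove_last, Fin.val_last]
    ring
  · intro j _ hj
    rw [h j, if_neg hj]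
    ring
  · intro ht; exact absurd (Finset.mem_univ t) ht

lemma engine {L : ℕ} (B : Matrix (Fin (L + 1)) (Fin (L + 2)) ℝ) (u : Fin L)
    (hDf : 0 < (B.submatrix id Fin.castSucc).det)
    (hDl : 0 < (B.submatrix id Fin.succ).det)
    (hM1 : 0 < (B.submatrix Fin.succ (Fin.succ ∘ Fin.succAbove u.castSucc)).det)
    (hM2 : 0 < (B.submatrix Fin.succ (Fin.castSucc ∘ Fin.succAbove u.succ)).det)
    (hE : 0 < (B.submatrix Fin.succ (fun j : Fin L => j.succ.castSucc)).det) :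
    0 < (B.submatrix id (Fin.succAbove u.succ.castSucc)).det := by
  set s : Fin (L + 2) := u.succ.castSucc with hs
  set C : Matrix (Fin (L + 2)) (Fin (L + 2)) ℝ :=
    fun i j => if h : (i : ℕ) < L + 1 then B ⟨i, h⟩ j else if j = s then 1 else 0 with hC
  have hCrow : ∀ (i : Fin (L + 1)) (j : Fin (L + 2)), C i.castSucc j = B i j := by
    intro i j
    rw [hC]
    simp only [Fin.coe_castSucc]
    rw [dif_pos i.isLt]
  have hClast : ∀ j, C (Fin.last (L + 1)) j = if j = s then 1 else 0 := by
    intro j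
    rw [hC]
    simp only [Fin.val_last]
    rw [dif_neg (lt_irrefl _)]
  -- the six determinants
  have p1 : C.submatrix Fin.castSucc Fin.castSucc = B.submatrix id Fin.castSucc := by
    ext i j; exact hCrow i _
  have p2 : C.submatrix Fin.castSucc Fin.succ = B.submatrix id Fin.succ := by
    ext i j; exact hCrow i _
  have p3 : C.submatrix (fun i : Fin L => i.succ.castSucc) (fun i : Fin L => i.succ.castSucc)
      = B.submatrix Fin.succ (fun j : Fin L => j.succ.castSucc) := by
    ext i j; exact hCrow i.succ _
  have p4 : C.det = (-1) ^ (L + (u : ℕ)) * (B.submatrix id (Fin.succAbove s)).det := by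
    have := det_unit_row C s hClast
    rw [this]
    have h1 : C.submatrix Fin.castSucc s.succAbove = B.submatrix id (Fin.succAbove s) := by
      ext i j; exact hCrow i _
    rw [h1]
    congr 1
    have : (s : ℕ) = (u : ℕ) + 1 := by simp [hs]
    rw [this]
    rw [show L + 1 + ((u : ℕ) + 1) = (L + (u : ℕ)) + 2 by ring, pow_add]
    norm_num
  have p5 : (C.submatrix Fin.succ Fin.succ).det =
      (-1) ^ (L + (u : ℕ)) * (B.submatrix Fin.succ (Fin.succ ∘ Fin.succAbove u.castSucc)).det := by
    have hl : ∀ j : Fin (L + 1), (C.submatrix Fin.succ Fin.succ) (Fin.last L) j =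
        if j = u.castSucc then 1 else 0 := by
      intro j
      rw [Matrix.submatrix_apply, Fin.succ_last, hClast]
      congr 1
      rw [eq_iff_iff]
      constructor
      · intro h
        have : j.succ = u.castSucc.succ := by rw [h, hs, Fin.succ_castSucc]
        exact Fin.succ_injective _ this
      · intro h; rw [h, hs, Fin.succ_castSucc]
    have := det_unit_row _ _ hl
    rw [this]
    have h2 : (C.submatrix Fin.succ Fin.succ).submatrix Fin.castSucc (u.castSucc).succAbove
        = B.submatrix Fin.succ (Fin.succ ∘ Fin.succAbove u.castSucc) := by
      ext i j
      simp only [Matrix.submatrix_apply, Function.comp_apply]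
      rw [show (i.castSucc).succ = (i.succ).castSucc from (Fin.succ_castSucc i).symm, hCrow]
    rw [h2, Fin.coe_castSucc]
  have p6 : (C.submatrix Fin.succ Fin.castSucc).det =
      -((-1) ^ (L + (u : ℕ)) *
        (B.submatrix Fin.succ (Fin.castSucc ∘ Fin.succAbove u.succ)).det) := by
    have hl : ∀ j : Fin (L + 1), (C.submatrix Fin.succ Fin.castSucc) (Fin.last L) j =
        if j = u.succ then 1 else 0 := by
      intro j
      rw [Matrix.submatrix_apply, Fin.succ_last, hClast]
      congr 1
      rw [eq_iff_iff]
      constructor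
      · intro h; exact Fin.castSucc_injective _ (by rw [h, hs])
      · intro h; rw [h, hs]
    have := det_unit_row _ _ hl
    rw [this]
    have h2 : (C.submatrix Fin.succ Fin.castSucc).submatrix Fin.castSucc (u.succ).succAbove
        = B.submatrix Fin.succ (Fin.castSucc ∘ Fin.succAbove u.succ) := by
      ext i j
      simp only [Matrix.submatrix_apply, Function.comp_apply]
      rw [show (i.castSucc).succ = (i.succ).castSucc from (Fin.succ_castSucc i).symm, hCrow]
    rw [h2]
    rw [Fin.val_succ, show L + ((u : ℕ) + 1) = (L + (u : ℕ)) + 1 by ring, pow_succ]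
    ring
  have hEunit : IsUnit ((C.submatrix (fun i : Fin L => i.succ.castSucc)
      (fun i : Fin L => i.succ.castSucc)).det) := by
    rw [p3]; exact (ne_of_gt hE).isUnit
  have key := desnanot C hEunit
  rw [p1, p2, p3, p4, p5, p6] at key
  set ε : ℝ := (-1) ^ (L + (u : ℕ)) with hε
  have hee : ε * ε = 1 := by
    rw [hε, ← mul_pow]
    norm_num
  set T := (B.submatrix id (Fin.succAbove s)).det
  set Ed := (B.submatrix Fin.succ fun j : Fin L => j.succ.castSucc).det
  set Df := (B.submatrix id Fin.castSucc).det
  set Dl := (B.submatrix id Fin.succ).det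
  set M1 := (B.submatrix Fin.succ (Fin.succ ∘ Fin.succAbove u.castSucc)).det
  set M2 := (B.submatrix Fin.succ (Fin.castSucc ∘ Fin.succAbove u.succ)).det
  -- key : ε * T * Ed = Df * (ε * M1) - Dl * (-(ε * M2))
  have key2 : T * Ed = Df * M1 + Dl * M2 := by
    have h3 : ε * (ε * T * Ed) = ε * (Df * (ε * M1) - Dl * (-(ε * M2))) := by rw [key]
    calc T * Ed = (ε * ε) * (T * Ed) := by rw [hee]; ring
    _ = ε * (ε * T * Ed) := by ring
    _ = ε * (Df * (ε * M1) - Dl * (-(ε * M2))) := h3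
    _ = (ε * ε) * (Df * M1 + Dl * M2) := by ring
    _ = Df * M1 + Dl * M2 := by rw [hee]; ring
  nlinarith [mul_pos hDf hM1, mul_pos hDl hM2]

lemma succAbove_val {N : ℕ} (s : Fin (N + 1)) (j : Fin N) :
    ((s.succAbove j : Fin (N + 1)) : ℕ) = if (j : ℕ) < (s : ℕ) then (j : ℕ) else (j : ℕ) + 1 := by
  rcases lt_or_ge ((j : ℕ)) ((s : ℕ)) with h | h
  · rw [Fin.succAbove_of_castSucc_lt s j (by rwa [Fin.lt_def]), if_pos h]
    rfl
  · rw [Fin.succAbove_of_le_castSucc s j (by rw [Fin.le_def]; simpa using h), if_neg (by omega)]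
    rfl

lemma sm_gap {K γ : ℕ} {f : Fin K → Fin γ} (hf : StrictMono f) :
    ∀ a b : ℕ, ∀ (ha : a < K) (hb : b < K), a ≤ b →
      (f ⟨a, ha⟩ : ℕ) + (b - a) ≤ (f ⟨b, hb⟩ : ℕ) := by
  intro a b
  induction b with
  | zero =>
    intro ha hb hab
    have : a = 0 := by omega
    subst this; simp
  | succ b ihb =>
    intro ha hb hab
    rcases Nat.eq_or_lt_of_le hab with rfl | hlt
    · simp
    · have hb' : b < K := by omega
      have h1 := ihb ha hb' (by omega)
      have h2 : f ⟨b, hb'⟩ < f ⟨b + 1, hb⟩ := hf (by simp [Fin.lt_def])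
      rw [Fin.lt_def] at h2
      omega

lemma sm_contig {K γ : ℕ} {f : Fin (K + 1) → Fin γ} (hf : StrictMono f)
    (h : (f (Fin.last K) : ℕ) ≤ (f 0 : ℕ) + K) :
    ∀ i : Fin (K + 1), (f i : ℕ) = (f 0 : ℕ) + (i : ℕ) := by
  intro i
  have h1 := sm_gap hf 0 (i : ℕ) (by omega) i.isLt (by omega)
  have h2 := sm_gap hf (i : ℕ) K i.isLt (by omega) (by omega)
  have e0 : (0 : Fin (K + 1)) = ⟨0, by omega⟩ := rfl
  have el : Fin.last K = ⟨K, by omega⟩ := rfl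
  rw [e0] at h ⊢
  rw [el] at h
  have ei : i = ⟨(i : ℕ), i.isLt⟩ := Fin.ext rfl
  rw [ei]
  omega

lemma sm_gap_exists {K γ : ℕ} {f : Fin (K + 1) → Fin γ} (hf : StrictMono f)
    (h : ¬ ∀ i : Fin (K + 1), (f i : ℕ) = (f 0 : ℕ) + (i : ℕ)) :
    ∃ p : Fin K, (f p.castSucc : ℕ) + 1 < (f p.succ : ℕ) := by
  by_contra hc
  push_neg at hc
  apply h
  intro i
  induction i using Fin.induction with
  | zero => simp
  | succ p ih =>
    have h1 : f p.castSucc < f p.succ := hf (Fin.castSucc_lt_succ (i := p))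
    rw [Fin.lt_def] at h1
    have h2 := hc p
    have h3 : (p.succ : ℕ) = (p.castSucc : ℕ) + 1 := by simp
    omega

lemma gap_insert {K γ : ℕ} {f : Fin (K + 1) → Fin γ} (hf : StrictMono f) (p : Fin K)
    (hgap : (f p.castSucc : ℕ) + 1 < (f p.succ : ℕ)) :
    ∃ Γ : Fin (K + 2) → Fin γ, StrictMono Γ ∧
      Γ ∘ Fin.succAbove (p.succ.castSucc) = f ∧
      (Γ (Fin.last (K + 1)) : ℕ) = (f (Fin.last K) : ℕ) ∧
      (Γ 0 : ℕ) = (f 0 : ℕ) ∧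
      (Γ ⟨K, by omega⟩ : ℕ) + 1 ≤ (f (Fin.last K) : ℕ) ∧
      (f 0 : ℕ) + 1 ≤ (Γ 1 : ℕ) := by
  have hK : 1 ≤ K := by have := p.isLt; omega
  set rv : ℕ → ℕ := fun t => if h : t < K + 1 then (f ⟨t, h⟩ : ℕ) else 0 with hrv
  have rv_eq : ∀ (t : ℕ) (h : t < K + 1), rv t = (f ⟨t, h⟩ : ℕ) := by
    intro t h; rw [hrv]; simp [h]
  have rv_adj : ∀ t, t + 1 < K + 1 → rv t + 1 ≤ rv (t + 1) := by
    intro t ht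
    rw [rv_eq t (by omega), rv_eq (t + 1) ht]
    have : f ⟨t, by omega⟩ < f ⟨t + 1, ht⟩ := hf (by simp [Fin.lt_def])
    rw [Fin.lt_def] at this
    omega
  have rv_lt : ∀ t, t < K + 1 → rv t < γ := by
    intro t h; rw [rv_eq t h]; exact (f _).isLt
  have hgap' : rv (p : ℕ) + 2 ≤ rv ((p : ℕ) + 1) := by
    rw [rv_eq (p : ℕ) (by omega), rv_eq ((p : ℕ) + 1) (by omega)]
    have e1 : p.castSucc = (⟨(p : ℕ), by omega⟩ : Fin (K + 1)) := Fin.ext rfl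
    have e2 : p.succ = (⟨(p : ℕ) + 1, by omega⟩ : Fin (K + 1)) := Fin.ext rfl
    rw [e1, e2] at hgap
    omega
  set Γv : ℕ → ℕ := fun t =>
    if t ≤ (p : ℕ) then rv t else if t = (p : ℕ) + 1 then rv (p : ℕ) + 1 else rv (t - 1)
    with hΓv
  have hb : ∀ t, t < K + 2 → Γv t < γ := by
    intro t ht
    simp only [hΓv]
    split_ifs with h1 h2
    · exact rv_lt t (by have := p.isLt; omega)
    · have := rv_lt ((p : ℕ) + 1) (by have := p.isLt; omega)
      omega
    · exact rv_lt (t - 1) (by omega)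
  have Γv_adj : ∀ t, t + 1 < K + 2 → Γv t < Γv (t + 1) := by
    intro t ht
    simp only [hΓv]
    by_cases h1 : t + 1 ≤ (p : ℕ)
    · rw [if_pos (by omega), if_pos h1]
      have := rv_adj t (by have := p.isLt; omega)
      omega
    · by_cases h2 : t + 1 = (p : ℕ) + 1
      · rw [if_pos (by omega), if_neg (by omega), if_pos h2]
        have : t = (p : ℕ) := by omega
        rw [this]
        omega
      · by_cases h3 : t = (p : ℕ) + 1
        · rw [if_neg (by omega), if_pos h3, if_neg (by omega), if_neg (by omega)]
          have e : t + 1 - 1 = (p : ℕ) + 1 := by omega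
          rw [e]
          omega
        · rw [if_neg (by omega), if_neg h3, if_neg (by omega), if_neg (by omega)]
          have e : t + 1 - 1 = (t - 1) + 1 := by omega
          rw [e]
          have := rv_adj (t - 1) (by omega)
          omega
  have Γv_ple : ∀ t, t ≤ (p : ℕ) → Γv t = rv t := by
    intro t ht; simp only [hΓv]; rw [if_pos ht]
  have Γv_top : ∀ t, (p : ℕ) + 2 ≤ t → Γv t = rv (t - 1) := by
    intro t ht; simp only [hΓv]; rw [if_neg (by omega), if_neg (by omega)]
  have Γv_mid : Γv ((p : ℕ) + 1) = rv (p : ℕ) + 1 := by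
    simp [hΓv]
  refine ⟨fun j => ⟨Γv (j : ℕ), hb _ j.isLt⟩, ?_, ?_, ?_, ?_, ?_, ?_⟩
  · rw [Fin.strictMono_iff_lt_succ]
    intro i
    rw [Fin.lt_def]
    simp only [Fin.coe_castSucc, Fin.val_succ]
    exact Γv_adj (i : ℕ) (by have := i.isLt; omega)
  · funext j
    apply Fin.ext
    simp only [Function.comp_apply]
    have hsv : ((p.succ.castSucc : Fin (K + 2)) : ℕ) = (p : ℕ) + 1 := by simp
    show Γv (((p.succ.castSucc).succAbove j : Fin (K + 2)) : ℕ) = (f j : ℕ)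
    rw [succAbove_val, hsv]
    by_cases hj : (j : ℕ) < (p : ℕ) + 1
    · rw [if_pos hj, Γv_ple (j : ℕ) (by omega), rv_eq (j : ℕ) j.isLt]
    · rw [if_neg hj, Γv_top ((j : ℕ) + 1) (by omega)]
      have e : (j : ℕ) + 1 - 1 = (j : ℕ) := by omega
      rw [e, rv_eq (j : ℕ) j.isLt]
  · show Γv ((Fin.last (K + 1) : Fin (K + 2)) : ℕ) = _
    rw [Fin.val_last, Γv_top (K + 1) (by have := p.isLt; omega)]
    have e : K + 1 - 1 = K := by omega
    rw [e, rv_eq K (by omega)]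
    exact congrArg Fin.val (congrArg f (Fin.ext rfl))
  · show Γv ((0 : Fin (K + 2)) : ℕ) = _
    rw [Fin.val_zero, Γv_ple 0 (by omega), rv_eq 0 (by omega)]
    exact congrArg Fin.val (congrArg f (Fin.ext rfl))
  · show Γv K + 1 ≤ _
    have hfl : (f (Fin.last K) : ℕ) = rv K := by
      rw [rv_eq K (by omega)]
      exact congrArg Fin.val (congrArg f (Fin.ext rfl))
    by_cases h1 : K = (p : ℕ) + 1
    · have e1 : Γv K = rv (p : ℕ) + 1 := (congrArg Γv h1).trans Γv_mid
      have e2 : rv K = rv ((p : ℕ) + 1) := congrArg rv h1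
      rw [hfl]
      omega
    · rw [hfl, Γv_top K (by have := p.isLt; omega)]
      have := rv_adj (K - 1) (by omega)
      have e : K - 1 + 1 = K := by omega
      rw [e] at this
      omega
  · have h1v : ((1 : Fin (K + 2)) : ℕ) = 1 := by simp
    show (f 0 : ℕ) + 1 ≤ Γv ((1 : Fin (K + 2)) : ℕ)
    rw [h1v]
    have hf0 : (f 0 : ℕ) = rv 0 := by
      rw [rv_eq 0 (by omega)]
      exact congrArg Fin.val (congrArg f (Fin.ext rfl))
    by_cases h1 : 1 ≤ (p : ℕ)
    · rw [Γv_ple 1 h1, hf0]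
      have := rv_adj 0 (by omega)
      simp only [Nat.zero_add] at this
      omega
    · have hp0 : (p : ℕ) = 0 := by omega
      have e1 : Γv 1 = rv (p : ℕ) + 1 :=
        (congrArg Γv (show (1 : ℕ) = (p : ℕ) + 1 by omega)).trans Γv_mid
      have e2 : rv (p : ℕ) = rv 0 := congrArg rv hp0
      rw [hf0]
      omega

theorem fekete_criterion' {m n k : ℕ} (A : Matrix (Fin m) (Fin n) ℝ)
    (hk : k ≤ min m n)
    (hcontig : ∀ (l : ℕ), l ≤ k → ∀ (i j : ℕ) (hi : i + l ≤ m) (hj : j + l ≤ n),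
      0 < (A.submatrix
        (fun p : Fin l => (⟨i + p.1, Nat.lt_of_lt_of_le (Nat.add_lt_add_left p.2 i) hi⟩ : Fin m))
        (fun p : Fin l => (⟨j + p.1, Nat.lt_of_lt_of_le (Nat.add_lt_add_left p.2 j) hj⟩ : Fin n))).det) :
    ∀ (l : ℕ), l ≤ k → ∀ (r : Fin l → Fin m) (c : Fin l → Fin n),
      StrictMono r → StrictMono c → 0 < (A.submatrix r c).det := by
  intro l
  induction l using Nat.strong_induction_on with
  | _ l IH =>
  intro hl
  obtain _ | L := l
  · intro r c _ _
    simp [Matrix.det_isEmpty]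
  -- l = L + 1
  have hLk : L ≤ k := by omega
  have hLl : L < L + 1 := by omega
  -- base: both contiguous
  have base : ∀ (r : Fin (L + 1) → Fin m) (c : Fin (L + 1) → Fin n),
      (∀ i, (r i : ℕ) = (r 0 : ℕ) + (i : ℕ)) → (∀ i, (c i : ℕ) = (c 0 : ℕ) + (i : ℕ)) →
      0 < (A.submatrix r c).det := by
    intro r c hrc hcc
    have hm : (r 0 : ℕ) + (L + 1) ≤ m := by
      have h1 := (r (Fin.last L)).isLt
      have h2 := hrc (Fin.last L)
      rw [Fin.val_last] at h2
      omega
    have hn : (c 0 : ℕ) + (L + 1) ≤ n := by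
      have h1 := (c (Fin.last L)).isLt
      have h2 := hcc (Fin.last L)
      rw [Fin.val_last] at h2
      omega
    have key := hcontig (L + 1) hl (r 0 : ℕ) (c 0 : ℕ) hm hn
    have heq : A.submatrix r c = A.submatrix
        (fun p : Fin (L + 1) => (⟨(r 0 : ℕ) + (p : ℕ), by have := p.isLt; omega⟩ : Fin m))
        (fun p : Fin (L + 1) => (⟨(c 0 : ℕ) + (p : ℕ), by have := p.isLt; omega⟩ : Fin n)) := by
      ext i j
      have e1 : r i = (⟨(r 0 : ℕ) + (i : ℕ), by have := i.isLt; omega⟩ : Fin m) :=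
        Fin.ext (hrc i)
      have e2 : c j = (⟨(c 0 : ℕ) + (j : ℕ), by have := j.isLt; omega⟩ : Fin n) :=
        Fin.ext (hcc j)
      simp only [Matrix.submatrix_apply]
      rw [e1, e2]
    rw [heq]
    exact key
  -- stage 2: columns contiguous, rows arbitrary (induct on row dispersion)
  have stage2 : ∀ d : ℕ, ∀ (r : Fin (L + 1) → Fin m) (c : Fin (L + 1) → Fin n),
      StrictMono r → StrictMono c → ((r (Fin.last L) : ℕ) ≤ (r 0 : ℕ) + L + d) →
      (∀ i, (c i : ℕ) = (c 0 : ℕ) + (i : ℕ)) → 0 < (A.submatrix r c).det := by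
    intro d
    induction d with
    | zero =>
      intro r c hr hc hdisp hcc
      exact base r c (sm_contig hr (by omega)) hcc
    | succ d ih =>
      intro r c hr hc hdisp hcc
      by_cases hcont : ∀ i, (r i : ℕ) = (r 0 : ℕ) + (i : ℕ)
      · exact base r c hcont hcc
      · obtain ⟨p, hp⟩ := sm_gap_exists hr hcont
        obtain ⟨Γ, hΓsm, hΓcomp, hΓlast, hΓ0, hΓK, hΓ1⟩ := gap_insert hr p hp
        have hsub : ∀ {w : ℕ} (f : Fin w → Fin (L + 1)) (g : Fin w → Fin (L + 2)),
            (((Aᵀ.submatrix c Γ).submatrix f g)).det = (A.submatrix (Γ ∘ g) (c ∘ f)).det := by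
          intro w f g
          rw [Matrix.submatrix_submatrix, ← Matrix.det_transpose, Matrix.transpose_submatrix,
            Matrix.transpose_transpose]
        have hDf : 0 < ((Aᵀ.submatrix c Γ).submatrix id Fin.castSucc).det := by
          rw [hsub id Fin.castSucc, Function.comp_id]
          apply ih (Γ ∘ Fin.castSucc) c (hΓsm.comp Fin.strictMono_castSucc) hc ?_ hcc
          have e1 : (Fin.last L).castSucc = (⟨L, by omega⟩ : Fin (L + 2)) := Fin.ext rfl
          have e2 : (0 : Fin (L + 1)).castSucc = (0 : Fin (L + 2)) := Fin.castSucc_zero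
          simp only [Function.comp_apply]
          rw [e1, e2]
          omega
        have hDl : 0 < ((Aᵀ.submatrix c Γ).submatrix id Fin.succ).det := by
          rw [hsub id Fin.succ, Function.comp_id]
          apply ih (Γ ∘ Fin.succ) c (hΓsm.comp Fin.strictMono_succ) hc ?_ hcc
          have e1 : (Fin.last L).succ = Fin.last (L + 1) := Fin.succ_last L
          have e2 : (0 : Fin (L + 1)).succ = (1 : Fin (L + 2)) := Fin.succ_zero_eq_one
          simp only [Function.comp_apply]
          rw [e1, e2]
          omega
        have hM1 : 0 < ((Aᵀ.submatrix c Γ).submatrix Fin.succ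
            (Fin.succ ∘ Fin.succAbove p.castSucc)).det := by
          rw [hsub Fin.succ (Fin.succ ∘ Fin.succAbove p.castSucc)]
          exact IH L hLl hLk _ _
            (hΓsm.comp (Fin.strictMono_succ.comp (Fin.strictMono_succAbove _)))
            (hc.comp Fin.strictMono_succ)
        have hM2 : 0 < ((Aᵀ.submatrix c Γ).submatrix Fin.succ
            (Fin.castSucc ∘ Fin.succAbove p.succ)).det := by
          rw [hsub Fin.succ (Fin.castSucc ∘ Fin.succAbove p.succ)]
          exact IH L hLl hLk _ _
            (hΓsm.comp (Fin.strictMono_castSucc.comp (Fin.strictMono_succAbove _)))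
            (hc.comp Fin.strictMono_succ)
        have hE : 0 < ((Aᵀ.submatrix c Γ).submatrix Fin.succ
            (fun j : Fin L => j.succ.castSucc)).det := by
          rw [hsub Fin.succ (fun j : Fin L => j.succ.castSucc)]
          exact IH L hLl hLk _ _
            (hΓsm.comp (Fin.strictMono_castSucc.comp Fin.strictMono_succ))
            (hc.comp Fin.strictMono_succ)
        have key := engine (Aᵀ.submatrix c Γ) p hDf hDl hM1 hM2 hE
        rw [hsub id (Fin.succAbove p.succ.castSucc), Function.comp_id, hΓcomp] at key
        exact key
  -- stage 1: rows arbitrary, columns arbitrary (induct on column dispersion)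
  have stage1 : ∀ d : ℕ, ∀ (r : Fin (L + 1) → Fin m) (c : Fin (L + 1) → Fin n),
      StrictMono r → StrictMono c → ((c (Fin.last L) : ℕ) ≤ (c 0 : ℕ) + L + d) →
      0 < (A.submatrix r c).det := by
    intro d
    induction d with
    | zero =>
      intro r c hr hc hdisp
      exact stage2 m r c hr hc (by have := (r (Fin.last L)).isLt; omega)
        (sm_contig hc (by omega))
    | succ d ih =>
      intro r c hr hc hdisp
      by_cases hcont : ∀ i, (c i : ℕ) = (c 0 : ℕ) + (i : ℕ)
      · exact stage2 m r c hr hc (by have := (r (Fin.last L)).isLt; omega) hcont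
      · obtain ⟨p, hp⟩ := sm_gap_exists hc hcont
        obtain ⟨Γ, hΓsm, hΓcomp, hΓlast, hΓ0, hΓK, hΓ1⟩ := gap_insert hc p hp
        have hsub : ∀ {w : ℕ} (f : Fin w → Fin (L + 1)) (g : Fin w → Fin (L + 2)),
            ((A.submatrix r Γ).submatrix f g) = A.submatrix (r ∘ f) (Γ ∘ g) := by
          intro w f g
          rw [Matrix.submatrix_submatrix]
        have hDf : 0 < ((A.submatrix r Γ).submatrix id Fin.castSucc).det := by
          rw [hsub id Fin.castSucc, Function.comp_id]
          apply ih r (Γ ∘ Fin.castSucc) hr (hΓsm.comp Fin.strictMono_castSucc)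
          have e1 : (Fin.last L).castSucc = (⟨L, by omega⟩ : Fin (L + 2)) := Fin.ext rfl
          have e2 : (0 : Fin (L + 1)).castSucc = (0 : Fin (L + 2)) := Fin.castSucc_zero
          simp only [Function.comp_apply]
          rw [e1, e2]
          omega
        have hDl : 0 < ((A.submatrix r Γ).submatrix id Fin.succ).det := by
          rw [hsub id Fin.succ, Function.comp_id]
          apply ih r (Γ ∘ Fin.succ) hr (hΓsm.comp Fin.strictMono_succ)
          have e1 : (Fin.last L).succ = Fin.last (L + 1) := Fin.succ_last L
          have e2 : (0 : Fin (L + 1)).succ = (1 : Fin (L + 2)) := Fin.succ_zero_eq_one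
          simp only [Function.comp_apply]
          rw [e1, e2]
          omega
        have hM1 : 0 < ((A.submatrix r Γ).submatrix Fin.succ
            (Fin.succ ∘ Fin.succAbove p.castSucc)).det := by
          rw [hsub Fin.succ (Fin.succ ∘ Fin.succAbove p.castSucc)]
          exact IH L hLl hLk _ _ (hr.comp Fin.strictMono_succ)
            (hΓsm.comp (Fin.strictMono_succ.comp (Fin.strictMono_succAbove _)))
        have hM2 : 0 < ((A.submatrix r Γ).submatrix Fin.succ
            (Fin.castSucc ∘ Fin.succAbove p.succ)).det := by
          rw [hsub Fin.succ (Fin.castSucc ∘ Fin.succAbove p.succ)]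
          exact IH L hLl hLk _ _ (hr.comp Fin.strictMono_succ)
            (hΓsm.comp (Fin.strictMono_castSucc.comp (Fin.strictMono_succAbove _)))
        have hE : 0 < ((A.submatrix r Γ).submatrix Fin.succ
            (fun j : Fin L => j.succ.castSucc)).det := by
          rw [hsub Fin.succ (fun j : Fin L => j.succ.castSucc)]
          exact IH L hLl hLk _ _ (hr.comp Fin.strictMono_succ)
            (hΓsm.comp (Fin.strictMono_castSucc.comp Fin.strictMono_succ))
        have key := engine (A.submatrix r Γ) p hDf hDl hM1 hM2 hE
        rw [hsub id (Fin.succAbove p.succ.castSucc), Function.comp_id, hΓcomp] at key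
        exact key
  intro r c hr hc
  exact stage1 n r c hr hc (by have := (c (Fin.last L)).isLt; omega)

/-- **Fekete's criterion.** If all contiguous minors of `A` of order at most `k`
are positive, then `A` is `TP_k`: all minors of order at most `k` are positive. -/
theorem fekete_criterion {m n k : ℕ} (A : Matrix (Fin m) (Fin n) ℝ)
    (hk : k ≤ min m n)
    (hcontig : ∀ (l : ℕ), l ≤ k → ∀ (i j : ℕ) (hi : i + l ≤ m) (hj : j + l ≤ n),
      0 < (A.submatrix
        (fun p : Fin l => (⟨i + p.1, by have := p.2; omega⟩ : Fin m))
        (fun p : Fin l => (⟨j + p.1, by have := p.2; omega⟩ : Fin n))).det) :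
    IsTPk A k := by
  intro l hl r c hr hc
  exact fekete_criterion' A hk hcontig l hl r c hr hc
end

section
/- Special case of Sylvester's identity: Let A be an n-by-n real matrix (n ≥ 2), A_22 = A[{2,...,n-1}], B = A[{1,...,n-1},{1,...,n-1}], C = A[{1,...,n-1},{2,...,n}], D = A[{2,...,n},{1,...,n-1}], E = A[{2,...,n},{2,...,n}]. Then det(B)·det(E) − det(C)·det(D) = det(A_22)·det(A). -/
open Matrix

open Matrix

open Polynomial in
lemma sylvester_inv {m : ℕ} (A : Matrix (Fin (m + 2)) (Fin (m + 2)) ℝ) (hA : A.det ≠ 0) :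
    (A.submatrix Fin.castSucc Fin.castSucc).det * (A.submatrix Fin.succ Fin.succ).det
      - (A.submatrix Fin.castSucc Fin.succ).det * (A.submatrix Fin.succ Fin.castSucc).det
      = (A.submatrix (fun i : Fin m => (⟨i.1 + 1, Nat.succ_lt_succ (Nat.lt_succ_of_lt i.2)⟩ : Fin (m + 2)))
                     (fun j : Fin m => (⟨j.1 + 1, Nat.succ_lt_succ (Nat.lt_succ_of_lt j.2)⟩ : Fin (m + 2)))).det
        * A.det := by
  set L : Fin (m + 2) := Fin.last (m + 1) with hLdef
  have hL0 : L ≠ 0 := by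
    simp only [hLdef, Ne, Fin.ext_iff, Fin.val_last, Fin.val_zero]
    omega
  -- the Dodgson condensation matrix N
  set N : Matrix (Fin (m + 2)) (Fin (m + 2)) ℝ :=
    Matrix.of (fun k j => if j = 0 then adjugate A k 0 else if j = L then adjugate A k L
      else if k = j then 1 else 0) with hNdef
  set U : Matrix (Fin (m + 2)) (Fin 2) ℝ :=
    Matrix.of (fun k p => if p = 0 then adjugate A k 0 - (1 : Matrix (Fin (m+2)) (Fin (m+2)) ℝ) k 0
      else adjugate A k L - (1 : Matrix (Fin (m+2)) (Fin (m+2)) ℝ) k L) with hUdef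
  set V : Matrix (Fin 2) (Fin (m + 2)) ℝ :=
    Matrix.of (fun p j => if p = 0 then (if j = 0 then (1:ℝ) else 0) else (if j = L then 1 else 0))
    with hVdef
  have hNUV : N = 1 + U * V := by
    ext k j
    simp only [hNdef, hUdef, hVdef, Matrix.add_apply, Matrix.mul_apply, Fin.sum_univ_two,
      Matrix.of_apply, Matrix.one_apply]
    by_cases h0 : j = 0
    · subst h0
      simp [hL0, if_neg (Ne.symm hL0)]
    · by_cases hl : j = L
      · subst hl
        simp [hL0, Ne.symm hL0, h0]
      · simp [h0, hl]
  have hdetN : N.det = adjugate A 0 0 * adjugate A L L - adjugate A 0 L * adjugate A L 0 := by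
    rw [hNUV, Matrix.det_one_add_mul_comm]
    have h2 : (1 + V * U : Matrix (Fin 2) (Fin 2) ℝ)
        = !![adjugate A 0 0, adjugate A 0 L; adjugate A L 0, adjugate A L L] := by
      ext p q
      have hsum : ∀ (c : Fin (m+2)) (q : Fin 2),
          (∑ j, (if j = c then (1:ℝ) else 0) * U j q) = U c q := by
        intro c q
        rw [Finset.sum_eq_single c]
        · simp
        · intro b _ hb; simp [hb]
        · simp
      fin_cases p <;> fin_cases q <;>
        simp only [Matrix.add_apply, Matrix.mul_apply, hVdef, Matrix.of_apply] <;>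
        simp only [if_true, if_false, Fin.zero_eta, Fin.mk_one, one_ne_zero, reduceIte] <;>
        rw [hsum] <;>
        simp [hUdef, Matrix.one_apply, hL0, Ne.symm hL0]
    rw [h2, Matrix.det_fin_two_of]
  -- A * N
  set W : Matrix (Fin (m + 2)) (Fin (m + 2)) ℝ :=
    Matrix.of (fun i j => if j = 0 then A.det * (if i = 0 then (1:ℝ) else 0)
      else if j = L then A.det * (if i = L then 1 else 0) else A i j) with hWdef
  have hAN : A * N = W := by
    ext i j
    by_cases h0 : j = 0
    · subst h0
      have h1 : (A * N) i 0 = (A * adjugate A) i 0 := by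
        simp only [Matrix.mul_apply, hNdef, Matrix.of_apply, if_pos rfl, ite_true]
      rw [h1, Matrix.mul_adjugate]
      simp [hWdef, Matrix.one_apply]
    · by_cases hl : j = L
      · subst hl
        have h1 : (A * N) i L = (A * adjugate A) i L := by
          simp only [Matrix.mul_apply, hNdef, Matrix.of_apply, if_neg hL0, if_pos rfl, ite_true]
        rw [h1, Matrix.mul_adjugate]
        simp [hWdef, Matrix.one_apply, hL0, Ne.symm hL0]
      · simp only [Matrix.mul_apply, hNdef, hWdef, Matrix.of_apply, if_neg h0, if_neg hl]
        rw [Finset.sum_eq_single j]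
        · simp
        · intro b _ hb; simp [hb]
        · simp
  -- determinant of W
  have hWsub : ∀ p q : Fin m,
      (W.submatrix Fin.succ Fin.succ).submatrix Fin.castSucc Fin.castSucc p q
        = A.submatrix (fun i : Fin m => (⟨i.1 + 1, by have := i.2; omega⟩ : Fin (m + 2)))
                      (fun j : Fin m => (⟨j.1 + 1, by have := j.2; omega⟩ : Fin (m + 2))) p q := by
    intro p q
    have hq0 : (Fin.castSucc q).succ ≠ (0 : Fin (m+2)) := by
      simp [Fin.ext_iff]
    have hqL : (Fin.castSucc q).succ ≠ L := by
      simp only [hLdef, Ne, Fin.ext_iff, Fin.val_succ, Fin.coe_castSucc, Fin.val_last]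
      have := q.2; omega
    simp only [Matrix.submatrix_apply, hWdef, Matrix.of_apply, if_neg hq0, if_neg hqL]
    congr 1 <;> simp [Fin.ext_iff]
  have hdetWsub : (W.submatrix Fin.succ Fin.succ).det
      = A.det * (A.submatrix (fun i : Fin m => (⟨i.1 + 1, by have := i.2; omega⟩ : Fin (m + 2)))
                 (fun j : Fin m => (⟨j.1 + 1, by have := j.2; omega⟩ : Fin (m + 2)))).det := by
    rw [Matrix.det_succ_column (W.submatrix Fin.succ Fin.succ) (Fin.last m)]
    have hcol : ∀ i : Fin (m+1),
        (W.submatrix Fin.succ Fin.succ) i (Fin.last m) = A.det * (if i = Fin.last m then 1 else 0) := by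
      intro i
      have hsl : (Fin.last m).succ = L := by simp [hLdef, Fin.ext_iff]
      simp only [Matrix.submatrix_apply, hsl, hWdef, Matrix.of_apply, if_neg hL0, if_pos rfl,
        ite_true]
      congr 1
      by_cases hi : i = Fin.last m
      · simp [hi, hsl]
      · have : i.succ ≠ L := by
          simp only [hLdef, Ne, Fin.ext_iff, Fin.val_succ, Fin.val_last] at *
          omega
        simp [hi, this]
    rw [Finset.sum_eq_single (Fin.last m)]
    · rw [hcol]
      have hsign : ((-1 : ℝ)) ^ ((Fin.last m : ℕ) + (Fin.last m : ℕ)) = 1 :=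
        Even.neg_one_pow ⟨m, by simp⟩
      rw [hsign]
      have heq : (W.submatrix Fin.succ Fin.succ).submatrix
          (Fin.last m).succAbove (Fin.last m).succAbove
          = A.submatrix (fun i : Fin m => (⟨i.1 + 1, by have := i.2; omega⟩ : Fin (m + 2)))
                        (fun j : Fin m => (⟨j.1 + 1, by have := j.2; omega⟩ : Fin (m + 2))) := by
        ext p q
        rw [Fin.succAbove_last]
        exact hWsub p q
      rw [heq]
      simp
    · intro b _ hb
      rw [hcol, if_neg hb]
      ring
    · simp
  have hdetW : W.det
      = A.det * (A.det * (A.submatrix (fun i : Fin m => (⟨i.1 + 1, by have := i.2; omega⟩ : Fin (m + 2)))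
                 (fun j : Fin m => (⟨j.1 + 1, by have := j.2; omega⟩ : Fin (m + 2)))).det) := by
    rw [Matrix.det_succ_column_zero]
    rw [Finset.sum_eq_single 0]
    · simp only [hWdef, Matrix.of_apply, if_pos rfl, ite_true, Fin.val_zero, pow_zero, one_mul,
        Fin.succAbove_zero, mul_one]
      rw [hdetWsub]
    · intro b _ hb
      simp [hWdef, hb]
    · simp
  -- put it together
  have hmain : A.det * N.det = A.det * (A.det
      * (A.submatrix (fun i : Fin m => (⟨i.1 + 1, by have := i.2; omega⟩ : Fin (m + 2)))
         (fun j : Fin m => (⟨j.1 + 1, by have := j.2; omega⟩ : Fin (m + 2)))).det) := by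
    rw [← Matrix.det_mul, hAN, hdetW]
  have hN2 := mul_left_cancel₀ hA hmain
  rw [hdetN] at hN2
  -- compute the adjugate entries
  have e00 : adjugate A 0 0 = (A.submatrix Fin.succ Fin.succ).det := by
    rw [adjugate_fin_succ_eq_det_submatrix]
    simp
  have eLL : adjugate A L L = (A.submatrix Fin.castSucc Fin.castSucc).det := by
    rw [adjugate_fin_succ_eq_det_submatrix]
    have : ((-1 : ℝ)) ^ ((L : ℕ) + (L : ℕ)) = 1 := Even.neg_one_pow ⟨(L : ℕ), by simp⟩
    rw [this, one_mul, hLdef, Fin.succAbove_last]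
  have e0L : adjugate A 0 L = (-1 : ℝ) ^ (m + 1) * (A.submatrix Fin.castSucc Fin.succ).det := by
    rw [adjugate_fin_succ_eq_det_submatrix]
    simp [hLdef, Fin.succAbove_last]
  have eL0 : adjugate A L 0 = (-1 : ℝ) ^ (m + 1) * (A.submatrix Fin.succ Fin.castSucc).det := by
    rw [adjugate_fin_succ_eq_det_submatrix]
    simp [hLdef, Fin.succAbove_last]
  rw [e00, eLL, e0L, eL0] at hN2
  have hsq : ((-1 : ℝ) ^ (m + 1)) * ((-1 : ℝ) ^ (m + 1)) = 1 := by
    rw [← pow_add]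
    exact Even.neg_one_pow ⟨m + 1, by ring⟩
  have hCD : ((-1 : ℝ) ^ (m + 1) * (A.submatrix Fin.castSucc Fin.succ).det)
      * ((-1 : ℝ) ^ (m + 1) * (A.submatrix Fin.succ Fin.castSucc).det)
      = (A.submatrix Fin.castSucc Fin.succ).det * (A.submatrix Fin.succ Fin.castSucc).det := by
    rw [mul_mul_mul_comm, hsq, one_mul]
  rw [hCD] at hN2
  linarith [hN2]

/-- **Special case of Sylvester's identity:**
`det B · det E − det C · det D = det A₂₂ · det A`, where `B, C, D, E` are the
four `(n-1)×(n-1)` corner contiguous submatrices and `A₂₂` is the central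
`(n-2)×(n-2)` submatrix (the matrix has size `n = m + 2 ≥ 2`). -/
theorem sylvester_special_case {m : ℕ} (A : Matrix (Fin (m + 2)) (Fin (m + 2)) ℝ) :
    (A.submatrix Fin.castSucc Fin.castSucc).det * (A.submatrix Fin.succ Fin.succ).det
      - (A.submatrix Fin.castSucc Fin.succ).det * (A.submatrix Fin.succ Fin.castSucc).det
      = (A.submatrix (fun i : Fin m => (⟨i.1 + 1, by have := i.2; omega⟩ : Fin (m + 2)))
                     (fun j : Fin m => (⟨j.1 + 1, by have := j.2; omega⟩ : Fin (m + 2)))).det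
        * A.det := by
  classical
  set F : Matrix (Fin (m + 2)) (Fin (m + 2)) ℝ → ℝ := fun X =>
    (X.submatrix Fin.castSucc Fin.castSucc).det * (X.submatrix Fin.succ Fin.succ).det
      - (X.submatrix Fin.castSucc Fin.succ).det * (X.submatrix Fin.succ Fin.castSucc).det
      - (X.submatrix (fun i : Fin m => (⟨i.1 + 1, by have := i.2; omega⟩ : Fin (m + 2)))
                     (fun j : Fin m => (⟨j.1 + 1, by have := j.2; omega⟩ : Fin (m + 2)))).det
        * X.det with hFdef
  suffices h : F A = 0 by
    simp only [hFdef] at h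
    linarith [h]
  -- determinant of A + t • 1 as a polynomial in t
  have key : ∀ t : ℝ, (A + t • 1).det = Polynomial.eval t (Matrix.charpoly (-A)) := by
    intro t
    have hmap : (charmatrix (-A)).map (Polynomial.evalRingHom t)
        = A + t • (1 : Matrix (Fin (m+2)) (Fin (m+2)) ℝ) := by
      ext i j
      by_cases h : i = j
      · subst h
        simp [charmatrix_apply_eq, Matrix.one_apply, add_comm]
      · simp [charmatrix_apply_ne _ _ _ h, Matrix.one_apply, h]
    rw [Matrix.charpoly, ← hmap]
    exact ((Polynomial.evalRingHom t).map_det (charmatrix (-A))).symm ▸ rfl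
  have hS : {t : ℝ | (A + t • 1).det = 0}.Finite := by
    apply Set.Finite.subset (Polynomial.finite_setOf_isRoot ((Matrix.charpoly_monic (-A)).ne_zero))
    intro t ht
    simp only [Set.mem_setOf_eq, Polynomial.IsRoot] at *
    rw [← key t]; exact ht
  have hdense : Dense {t : ℝ | (A + t • 1).det = 0}ᶜ := hS.countable.dense_compl ℝ
  have h1 : Continuous fun t : ℝ => A + t • (1 : Matrix (Fin (m+2)) (Fin (m+2)) ℝ) :=
    continuous_const.add (continuous_id.smul continuous_const)
  have hcont : Continuous fun t : ℝ => F (A + t • 1) := by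
    simp only [hFdef]
    exact ((((h1.matrix_submatrix _ _).matrix_det).mul
      ((h1.matrix_submatrix _ _).matrix_det)).sub
      (((h1.matrix_submatrix _ _).matrix_det).mul ((h1.matrix_submatrix _ _).matrix_det))).sub
      (((h1.matrix_submatrix _ _).matrix_det).mul h1.matrix_det)
  have heq : Set.EqOn (fun t : ℝ => F (A + t • 1)) (fun _ => (0:ℝ))
      {t : ℝ | (A + t • 1).det = 0}ᶜ := by
    intro t ht
    have hdet : (A + t • 1).det ≠ 0 := ht
    have := sylvester_inv (A + t • 1) hdet
    simp only [hFdef]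
    linarith [this]
  have hext := hcont.ext_on hdense continuous_const heq
  have h0 := congrFun hext 0
  have hA0 : A + (0:ℝ) • (1 : Matrix (Fin (m+2)) (Fin (m+2)) ℝ) = A := by
    simp
  rw [hA0] at h0
  exact h0
end

section
/- If A is an n-by-n totally positive matrix, then its (n-1)st compound C_{n-1}(A) is totally positive. -/
open Matrix

open Matrix

namespace TPAux

open Equiv Finset

variable {n l : ℕ}

lemma le_of_strictMono {r : Fin l → Fin n} (hr : StrictMono r) : l ≤ n := by
  simpa using Fintype.card_le_of_injective r hr.injective

lemma le_apply {r : Fin l → Fin n} (hr : StrictMono r) (i : Fin l) : (i : ℕ) ≤ (r i : ℕ) := by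
  induction' hm : (i : ℕ) with m ih generalizing i
  · exact Nat.zero_le _
  · have hm' : m < l := by omega
    have h1 : (⟨m, hm'⟩ : Fin l) < i := by simp [Fin.lt_def, hm]
    have := hr h1
    have := ih ⟨m, hm'⟩ rfl
    simp [Fin.lt_def] at this ⊢
    omega

/-- The complement of the range of `r`, as a finset. -/
def complSet (r : Fin l → Fin n) : Finset (Fin n) := (Finset.univ.image r)ᶜ

lemma complSet_card {r : Fin l → Fin n} (hr : Function.Injective r) :
    (complSet r).card = n - l := by
  simp [complSet, Finset.card_compl, Finset.card_image_of_injective _ hr]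

/-- The increasing enumeration of the complement of the range of `r`. -/
noncomputable def complEnum (r : Fin l → Fin n) (hr : Function.Injective r) :
    Fin (n - l) → Fin n :=
  fun i => (complSet r).orderEmbOfFin (complSet_card hr) i

lemma complEnum_strictMono (r : Fin l → Fin n) (hr : Function.Injective r) :
    StrictMono (complEnum r hr) :=
  ((complSet r).orderEmbOfFin (complSet_card hr)).strictMono

lemma range_complEnum (r : Fin l → Fin n) (hr : Function.Injective r) :
    Set.range (complEnum r hr) = (Set.range r)ᶜ := by
  have : Set.range (complEnum r hr) = ↑(complSet r) :=
    Finset.range_orderEmbOfFin _ _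
  rw [this]
  ext x
  simp [complSet, Set.range]

lemma mem_range_complEnum {r : Fin l → Fin n} (hr : Function.Injective r) {x : Fin n} :
    x ∈ Set.range (complEnum r hr) ↔ x ∉ Set.range r := by
  rw [range_complEnum]; rfl

/-- The bijection `Fin l ⊕ Fin (n-l) ≃ Fin n` given by `r` on the left and the
enumeration of the complement on the right. -/
noncomputable def eqvOf (r : Fin l → Fin n) (hr : StrictMono r) :
    (Fin l ⊕ Fin (n - l)) ≃ Fin n :=
  Equiv.ofBijective (Sum.elim r (complEnum r hr.injective)) (by
    have hln := le_of_strictMono hr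
    rw [Fintype.bijective_iff_injective_and_card]
    constructor
    · rintro (x | x) (y | y) hxy <;> simp only [Sum.elim_inl, Sum.elim_inr] at hxy
      · exact congrArg Sum.inl (hr.injective hxy)
      · exact absurd (⟨x, hxy⟩ : complEnum r hr.injective y ∈ Set.range r)
          ((mem_range_complEnum hr.injective).mp (Set.mem_range_self y))
      · exact absurd (⟨y, hxy.symm⟩ : complEnum r hr.injective x ∈ Set.range r)
          ((mem_range_complEnum hr.injective).mp (Set.mem_range_self x))
      · exact congrArg Sum.inr ((complEnum_strictMono r hr.injective).injective hxy)
    · simp [Fintype.card_sum]; omega)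

@[simp] lemma eqvOf_inl (r : Fin l → Fin n) (hr : StrictMono r) (i : Fin l) :
    eqvOf r hr (Sum.inl i) = r i := rfl

@[simp] lemma eqvOf_inr (r : Fin l → Fin n) (hr : StrictMono r) (i : Fin (n - l)) :
    eqvOf r hr (Sum.inr i) = complEnum r hr.injective i := rfl

/-- The canonical bijection `Fin l ⊕ Fin (n-l) ≃ Fin n` (when `l ≤ n`). -/
def e0 (h : l ≤ n) : (Fin l ⊕ Fin (n - l)) ≃ Fin n :=
  finSumFinEquiv.trans (finCongr (Nat.add_sub_cancel' h))

@[simp] lemma e0_inl (h : l ≤ n) (i : Fin l) : (e0 h (Sum.inl i) : ℕ) = i := by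
  simp [e0]

@[simp] lemma e0_inr (h : l ≤ n) (i : Fin (n - l)) : (e0 h (Sum.inr i) : ℕ) = l + i := by
  simp [e0]

/-- The permutation of `Fin n` sending the initial segment to the range of `r`
(via `r`) and the rest to the complement, in increasing order. -/
noncomputable def permOf {r : Fin l → Fin n} (hr : StrictMono r) : Equiv.Perm (Fin n) :=
  (e0 (le_of_strictMono hr)).symm.trans (eqvOf r hr)

lemma permOf_e0 {r : Fin l → Fin n} (hr : StrictMono r) (x : Fin l ⊕ Fin (n - l)) :
    permOf hr (e0 (le_of_strictMono hr) x) = eqvOf r hr x := by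
  simp [permOf]


lemma sign_permOf_aux : ∀ (N : ℕ) {l : ℕ} (r : Fin l → Fin n) (hr : StrictMono r),
    (∑ i, ((r i : ℕ) - (i : ℕ))) = N → Equiv.Perm.sign (permOf hr) = (-1) ^ N := by
  intro N
  induction N with
  | zero =>
    intro l r hr hsum
    have hall : ∀ i : Fin l, (r i : ℕ) = (i : ℕ) := by
      intro i
      have h1 := Finset.sum_eq_zero_iff.mp hsum i (Finset.mem_univ i)
      have h2 := le_apply hr i
      omega
    have hperm : permOf hr = 1 := by
      refine Equiv.ext fun x => ?_
      obtain ⟨y, rfl⟩ : ∃ y, x = e0 (le_of_strictMono hr) y :=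
        ⟨(e0 (le_of_strictMono hr)).symm x, by simp⟩
      rw [permOf_e0]
      cases y with
      | inl i =>
        show r i = e0 (le_of_strictMono hr) (Sum.inl i)
        apply Fin.ext
        rw [hall i, e0_inl]
      | inr i =>
        show complEnum r hr.injective i = e0 (le_of_strictMono hr) (Sum.inr i)
        have hgmono : StrictMono (fun i : Fin (n - l) => e0 (le_of_strictMono hr) (Sum.inr i)) := by
          intro a b hab
          rw [Fin.lt_def, e0_inr, e0_inr]
          rw [Fin.lt_def] at hab
          omega
        have hrange : Set.range (fun i : Fin (n - l) => e0 (le_of_strictMono hr) (Sum.inr i))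
            = (Set.range r)ᶜ := by
          ext x
          simp only [Set.mem_range, Set.mem_compl_iff]
          constructor
          · rintro ⟨i, rfl⟩ ⟨j, hj⟩
            have hv := congrArg Fin.val hj
            rw [hall j, e0_inr] at hv
            have := j.2
            omega
          · intro hx
            have hlx : l ≤ (x : ℕ) := by
              by_contra hcon
              push_neg at hcon
              exact hx ⟨⟨x, hcon⟩, Fin.ext (hall ⟨x, hcon⟩)⟩
            refine ⟨⟨(x : ℕ) - l, by have := x.2; omega⟩, Fin.ext ?_⟩
            rw [e0_inr]
            simp
            omega
        have hfun : complEnum r hr.injective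
            = fun i : Fin (n - l) => e0 (le_of_strictMono hr) (Sum.inr i) := by
          haveI : WellFoundedLT (Fin (n - l)) := Finite.to_wellFoundedLT
          exact ((complEnum_strictMono r hr.injective).range_inj hgmono).mp
            ((range_complEnum r hr.injective).trans hrange.symm)
        exact congrFun hfun i
    rw [hperm]
    simp
  | succ N ih =>
    intro l r hr hsum
    classical
    have hln := le_of_strictMono hr
    have hex : ∃ j : Fin l, (j : ℕ) < (r j : ℕ) := by
      by_contra hcon
      push_neg at hcon
      have hz : ∀ i ∈ Finset.univ, ((r i : ℕ) - (i : ℕ)) = 0 := fun i _ => by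
        have := hcon i; omega
      rw [Finset.sum_congr rfl hz] at hsum
      simp at hsum
    let s : Finset (Fin l) := Finset.univ.filter (fun j => (j : ℕ) < (r j : ℕ))
    have hs : s.Nonempty := ⟨hex.choose, by simp [s, hex.choose_spec]⟩
    set j := s.min' hs with hjdef
    have hj : (j : ℕ) < (r j : ℕ) := by
      have := s.min'_mem hs; simpa [s] using this
    have hmin : ∀ i : Fin l, i < j → (r i : ℕ) = i := by
      intro i hij
      by_contra hne
      have hlt : (i : ℕ) < r i := lt_of_le_of_ne (le_apply hr i) (fun h => hne h.symm)
      exact absurd hij (not_lt.mpr (s.min'_le i (by simp [s, hlt])))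
    have hbub := (r j).2
    set a : ℕ := (r j : ℕ) - 1 with ha
    have hra : (r j : ℕ) = a + 1 := by omega
    set aF : Fin n := ⟨a, by omega⟩ with haF
    set bF : Fin n := ⟨a + 1, by omega⟩ with hbF
    have hrj : r j = bF := Fin.ext hra
    have hanot : ∀ i : Fin l, r i ≠ aF := by
      intro i hi
      have hv := congrArg Fin.val hi
      simp only [hbF, haF] at hv
      rcases lt_trichotomy i j with h | h | h
      · have h1 := hmin i h
        have h2 : (i : ℕ) < (j : ℕ) := h
        omega
      · subst h; omega
      · have h3 := hr h
        rw [hrj, Fin.lt_def] at h3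
        simp only [hbF] at h3
        omega
    set r' : Fin l → Fin n := Function.update r j aF with hr'def
    have haFbF : aF < bF := by rw [Fin.lt_def]; simp [haF, hbF]
    have hr' : StrictMono r' := by
      intro x y hxy
      rcases eq_or_ne x j with rfl | hx <;> rcases eq_or_ne y j with rfl | hy
      · exact absurd hxy (lt_irrefl _)
      · rw [hr'def, Function.update_self, Function.update_of_ne hy]
        exact lt_trans haFbF (hrj ▸ hr hxy)
      · rw [hr'def, Function.update_of_ne hx, Function.update_self]
        have h1 := hr hxy
        rw [hrj, Fin.lt_def] at h1
        have h2 := hanot x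
        rw [Fin.lt_def]
        simp only [hbF] at h1
        simp only [haF]
        have h3 : (r x : ℕ) ≠ a := fun hc => h2 (Fin.ext hc)
        omega
      · rw [hr'def, Function.update_of_ne hx, Function.update_of_ne hy]
        exact hr hxy
    have hr'j : r' j = aF := by rw [hr'def, Function.update_self]
    have hr'ne : ∀ i : Fin l, i ≠ j → r' i = r i := fun i hi => by
      rw [hr'def, Function.update_of_ne hi]
    have haR : aF ∈ Set.range r' := ⟨j, hr'j⟩
    have hbnotR : bF ∉ Set.range r' := by
      rintro ⟨i, hi⟩
      rcases eq_or_ne i j with rfl | hi'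
      · rw [hr'j] at hi
        exact absurd (congrArg Fin.val hi) (by simp [haF, hbF])
      · rw [hr'ne i hi'] at hi
        exact hi' (hr.injective (hi.trans hrj.symm))
    -- the complement enumerations
    have hcompl : complEnum r hr.injective
        = fun i => Equiv.swap aF bF (complEnum r' hr'.injective i) := by
      have hgmono : StrictMono (fun i => Equiv.swap aF bF (complEnum r' hr'.injective i)) := by
        intro p q hpq
        have hx : complEnum r' hr'.injective p ∉ Set.range r' :=
          (mem_range_complEnum hr'.injective).mp (Set.mem_range_self p)
        have hy : complEnum r' hr'.injective q ∉ Set.range r' :=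
          (mem_range_complEnum hr'.injective).mp (Set.mem_range_self q)
        have hxy : complEnum r' hr'.injective p < complEnum r' hr'.injective q :=
          complEnum_strictMono r' hr'.injective hpq
        show Equiv.swap aF bF (complEnum r' hr'.injective p)
          < Equiv.swap aF bF (complEnum r' hr'.injective q)
        set x := complEnum r' hr'.injective p with hxdef
        set y := complEnum r' hr'.injective q with hydef
        have hxa : x ≠ aF := fun h => hx (h ▸ haR)
        have hya : y ≠ aF := fun h => hy (h ▸ haR)
        rcases eq_or_ne x bF with hxb | hxb
        · rw [hxb, Equiv.swap_apply_right]
          have hxy2 : bF < y := hxb ▸ hxy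
          have hyb : y ≠ bF := fun h => absurd (h ▸ hxy2) (lt_irrefl _)
          rw [Equiv.swap_apply_of_ne_of_ne hya hyb]
          exact lt_trans haFbF hxy2
        · rcases eq_or_ne y bF with hyb | hyb
          · rw [hyb, Equiv.swap_apply_right, Equiv.swap_apply_of_ne_of_ne hxa hxb]
            have h1 : (x : ℕ) < (y : ℕ) := hxy
            have h2 : (y : ℕ) = a + 1 := congrArg Fin.val hyb
            have h3 : (x : ℕ) ≠ a := fun hc => hxa (Fin.ext hc)
            show x < aF
            rw [Fin.lt_def]
            show (x : ℕ) < a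
            omega
          · rw [Equiv.swap_apply_of_ne_of_ne hxa hxb, Equiv.swap_apply_of_ne_of_ne hya hyb]
            exact hxy
      have hgrange : Set.range (fun i => Equiv.swap aF bF (complEnum r' hr'.injective i))
          = (Set.range r)ᶜ := by
        ext x
        simp only [Set.mem_range, Set.mem_compl_iff]
        constructor
        · rintro ⟨p, rfl⟩ ⟨i, hi⟩
          have hz : complEnum r' hr'.injective p ∉ Set.range r' :=
            (mem_range_complEnum hr'.injective).mp (Set.mem_range_self p)
          set z := complEnum r' hr'.injective p
          have hza : z ≠ aF := fun h => hz (h ▸ haR)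
          rcases eq_or_ne z bF with hzb | hzb
          · rw [hzb, Equiv.swap_apply_right] at hi
            exact hanot i hi
          · rw [Equiv.swap_apply_of_ne_of_ne hza hzb] at hi
            rcases eq_or_ne i j with rfl | hij
            · exact hzb ((hi.symm.trans hrj))
            · exact hz ⟨i, (hr'ne i hij).trans hi⟩
        · intro hx
          have hswx : Equiv.swap aF bF x ∉ Set.range r' := by
            rintro ⟨i, hi⟩
            rcases eq_or_ne x aF with rfl | hxa
            · rw [Equiv.swap_apply_left] at hi
              exact hbnotR ⟨i, hi⟩
            · rcases eq_or_ne x bF with rfl | hxb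
              · exact hx ⟨j, hrj⟩
              · rw [Equiv.swap_apply_of_ne_of_ne hxa hxb] at hi
                rcases eq_or_ne i j with rfl | hij
                · rw [hr'j] at hi
                  exact hxa hi.symm
                · rw [hr'ne i hij] at hi
                  exact hx ⟨i, hi⟩
          obtain ⟨p, hp⟩ := (mem_range_complEnum hr'.injective).mpr hswx
          exact ⟨p, by rw [hp]; exact Equiv.swap_apply_self aF bF x⟩
      haveI : WellFoundedLT (Fin (n - l)) := Finite.to_wellFoundedLT
      exact ((complEnum_strictMono r hr.injective).range_inj hgmono).mp
        ((range_complEnum r hr.injective).trans hgrange.symm)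
    have hswap : permOf hr = Equiv.swap aF bF * permOf hr' := by
      refine Equiv.ext fun x => ?_
      obtain ⟨y, rfl⟩ : ∃ y, x = e0 (le_of_strictMono hr) y :=
        ⟨(e0 (le_of_strictMono hr)).symm x, by simp⟩
      rw [Equiv.Perm.mul_apply, permOf_e0, permOf_e0]
      cases y with
      | inl i =>
        simp only [eqvOf_inl]
        rcases eq_or_ne i j with rfl | hij
        · rw [hr'j, Equiv.swap_apply_left, hrj]
        · rw [hr'ne i hij]
          exact (Equiv.swap_apply_of_ne_of_ne (hanot i)
            (fun h => hij (hr.injective (h.trans hrj.symm)))).symm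
      | inr i =>
        simp only [eqvOf_inr]
        exact congrFun hcompl i
    have hsum' : (∑ i, ((r' i : ℕ) - (i : ℕ))) = N := by
      have hfun : (fun i : Fin l => ((r' i : ℕ) - (i : ℕ)))
          = Function.update (fun i : Fin l => ((r i : ℕ) - (i : ℕ))) j (a - (j : ℕ)) := by
        funext i
        rcases eq_or_ne i j with rfl | hij
        · rw [hr'j, Function.update_self]
        · rw [hr'ne i hij, Function.update_of_ne hij]
      rw [hfun, Finset.sum_update_of_mem (Finset.mem_univ j)]
      rw [Finset.sum_eq_sum_sdiff_singleton_add (Finset.mem_univ j)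
        (fun i : Fin l => ((r i : ℕ) - (i : ℕ)))] at hsum
      omega
    rw [hswap, Equiv.Perm.sign_mul, Equiv.Perm.sign_swap (ne_of_lt haFbF),
      ih r' hr' hsum', pow_succ]
    exact mul_comm _ _

lemma sign_permOf {l : ℕ} {r : Fin l → Fin n} (hr : StrictMono r) :
    Equiv.Perm.sign (permOf hr) = (-1) ^ (∑ i, ((r i : ℕ) - (i : ℕ))) :=
  sign_permOf_aux _ r hr rfl


lemma block_jacobi {l m : ℕ} (M : Matrix (Fin l ⊕ Fin m) (Fin l ⊕ Fin m) ℝ) :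
    M.det * (M.adjugate.toBlocks₁₁).det = M.det ^ l * (M.toBlocks₂₂).det := by
  classical
  set P := M.adjugate.toBlocks₁₁ with hP
  set Q := M.adjugate.toBlocks₂₁ with hQ
  set Y : Matrix (Fin l ⊕ Fin m) (Fin l ⊕ Fin m) ℝ := fromBlocks P 0 Q 1 with hY
  have hadj : M * M.adjugate = M.det • 1 := M.mul_adjugate
  have hblocks :
      fromBlocks (M.toBlocks₁₁ * P + M.toBlocks₁₂ * Q)
          (M.toBlocks₁₁ * M.adjugate.toBlocks₁₂ + M.toBlocks₁₂ * M.adjugate.toBlocks₂₂)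
          (M.toBlocks₂₁ * P + M.toBlocks₂₂ * Q)
          (M.toBlocks₂₁ * M.adjugate.toBlocks₁₂ + M.toBlocks₂₂ * M.adjugate.toBlocks₂₂)
        = fromBlocks (M.det • 1) (M.det • 0) (M.det • 0) (M.det • 1) := by
    rw [← fromBlocks_multiply, fromBlocks_toBlocks, hP, hQ, fromBlocks_toBlocks, hadj,
      ← fromBlocks_smul, fromBlocks_one]
  have h11 : M.toBlocks₁₁ * P + M.toBlocks₁₂ * Q = M.det • 1 := by
    have h := congrArg Matrix.toBlocks₁₁ hblocks
    simpa using h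
  have h21 : M.toBlocks₂₁ * P + M.toBlocks₂₂ * Q = 0 := by
    have h := congrArg Matrix.toBlocks₂₁ hblocks
    simpa using h
  have hMY : M * Y = fromBlocks (M.det • 1) M.toBlocks₁₂ 0 M.toBlocks₂₂ := by
    conv_lhs => rw [← fromBlocks_toBlocks M, hY]
    rw [fromBlocks_multiply, h11, h21]
    simp
  have hdet : M.det * Y.det = M.det ^ l * (M.toBlocks₂₂).det := by
    rw [← det_mul, hMY, det_fromBlocks_zero₂₁, det_smul, det_one, Fintype.card_fin, mul_one]
  have hYdet : Y.det = P.det := by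
    rw [hY, det_fromBlocks_zero₁₂, det_one, mul_one]
  rw [← hYdet] at *
  exact hdet

variable {n : ℕ}

lemma jacobi_diag {l : ℕ} (h : l ≤ n) (N : Matrix (Fin n) (Fin n) ℝ) :
    N.det * ((N.adjugate.submatrix (fun i : Fin l => e0 h (Sum.inl i))
        (fun i : Fin l => e0 h (Sum.inl i))).det)
      = N.det ^ l * ((N.submatrix (fun i : Fin (n - l) => e0 h (Sum.inr i))
        (fun i : Fin (n - l) => e0 h (Sum.inr i))).det) := by
  have hb := block_jacobi (N.submatrix (e0 h) (e0 h))
  rw [det_submatrix_equiv_self, adjugate_submatrix_equiv_self] at hb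
  have h1 : (N.adjugate.submatrix (e0 h) (e0 h)).toBlocks₁₁
      = N.adjugate.submatrix (fun i : Fin l => e0 h (Sum.inl i))
        (fun i : Fin l => e0 h (Sum.inl i)) := rfl
  have h2 : (N.submatrix (e0 h) (e0 h)).toBlocks₂₂
      = N.submatrix (fun i : Fin (n - l) => e0 h (Sum.inr i))
        (fun i : Fin (n - l) => e0 h (Sum.inr i)) := rfl
  rw [h1, h2] at hb
  exact hb

lemma jacobi (A : Matrix (Fin n) (Fin n) ℝ) {l : ℕ} {r c : Fin l → Fin n}
    (hr : StrictMono r) (hc : StrictMono c) :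
    (((Equiv.Perm.sign (permOf hr) : ℤ) : ℝ) * ((Equiv.Perm.sign (permOf hc) : ℤ) : ℝ)) * A.det *
        (A.adjugate.submatrix r c).det
      = A.det ^ l * (A.submatrix (complEnum c hc.injective) (complEnum r hr.injective)).det := by
  classical
  have hl := le_of_strictMono hr
  set σr := permOf hr with hσr
  set σc := permOf hc with hσc
  set sr : ℝ := ((Equiv.Perm.sign σr : ℤ) : ℝ) with hsr
  set sc : ℝ := ((Equiv.Perm.sign σc : ℤ) : ℝ) with hsc
  have hsr1 : sr = 1 ∨ sr = -1 := by
    rcases Int.units_eq_one_or (Equiv.Perm.sign σr) with h | h <;> [left; right] <;>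
      simp [hsr, h]
  have hsc1 : sc = 1 ∨ sc = -1 := by
    rcases Int.units_eq_one_or (Equiv.Perm.sign σc) with h | h <;> [left; right] <;>
      simp [hsc, h]
  set N := A.submatrix (⇑σc) (⇑σr) with hN
  -- determinant of N
  have hdetN : N.det = sr * sc * A.det := by
    have h1 : N = (A.submatrix id (⇑σr)).submatrix (⇑σc) id := by
      ext i j; rfl
    rw [h1, det_permute, det_permute', hsr, hsc]
    push_cast
    ring
  -- N as a product
  have hARr : A * ((1 : Matrix (Fin n) (Fin n) ℝ).submatrix id (⇑σr)) = A.submatrix id (⇑σr) := by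
    have h := submatrix_mul_equiv A (1 : Matrix (Fin n) (Fin n) ℝ) id (Equiv.refl (Fin n)) (⇑σr)
    simpa using h
  have hN2 : ((1 : Matrix (Fin n) (Fin n) ℝ).submatrix (⇑σc) id) * (A.submatrix id (⇑σr)) = N := by
    have h := submatrix_mul_equiv (1 : Matrix (Fin n) (Fin n) ℝ) (A.submatrix id (⇑σr)) (⇑σc)
      (Equiv.refl (Fin n)) id
    simpa [Matrix.submatrix_submatrix] using h
  -- adjugates of the permutation matrices
  have hPc : ((1 : Matrix (Fin n) (Fin n) ℝ).submatrix (⇑σc) id) *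
      ((1 : Matrix (Fin n) (Fin n) ℝ).submatrix id (⇑σc)) = 1 := by
    have h := submatrix_mul_equiv (1 : Matrix (Fin n) (Fin n) ℝ) (1 : Matrix (Fin n) (Fin n) ℝ)
      (⇑σc) (Equiv.refl (Fin n)) (⇑σc)
    simpa [Matrix.submatrix_one_equiv] using h
  have hRr : ((1 : Matrix (Fin n) (Fin n) ℝ).submatrix (⇑σr) id) *
      ((1 : Matrix (Fin n) (Fin n) ℝ).submatrix id (⇑σr)) = 1 := by
    have h := submatrix_mul_equiv (1 : Matrix (Fin n) (Fin n) ℝ) (1 : Matrix (Fin n) (Fin n) ℝ)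
      (⇑σr) (Equiv.refl (Fin n)) (⇑σr)
    simpa [Matrix.submatrix_one_equiv] using h
  have hdetPc : ((1 : Matrix (Fin n) (Fin n) ℝ).submatrix (⇑σc) id).det = sc := by
    rw [det_permute, det_one, hsc, mul_one]
  have hdetRr : ((1 : Matrix (Fin n) (Fin n) ℝ).submatrix id (⇑σr)).det = sr := by
    rw [det_permute', det_one, hsr, mul_one]
  have hadjPc : ((1 : Matrix (Fin n) (Fin n) ℝ).submatrix (⇑σc) id).adjugate
      = sc • ((1 : Matrix (Fin n) (Fin n) ℝ).submatrix id (⇑σc)) := by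
    calc ((1 : Matrix (Fin n) (Fin n) ℝ).submatrix (⇑σc) id).adjugate
        = ((1 : Matrix (Fin n) (Fin n) ℝ).submatrix (⇑σc) id).adjugate *
          (((1 : Matrix (Fin n) (Fin n) ℝ).submatrix (⇑σc) id) *
            ((1 : Matrix (Fin n) (Fin n) ℝ).submatrix id (⇑σc))) := by rw [hPc, Matrix.mul_one]
      _ = (((1 : Matrix (Fin n) (Fin n) ℝ).submatrix (⇑σc) id).adjugate *
            ((1 : Matrix (Fin n) (Fin n) ℝ).submatrix (⇑σc) id)) *
            ((1 : Matrix (Fin n) (Fin n) ℝ).submatrix id (⇑σc)) := by rw [Matrix.mul_assoc]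
      _ = sc • ((1 : Matrix (Fin n) (Fin n) ℝ).submatrix id (⇑σc)) := by
          rw [Matrix.adjugate_mul, hdetPc, Matrix.smul_mul, Matrix.one_mul]
  have hRr2 : ((1 : Matrix (Fin n) (Fin n) ℝ).submatrix id (⇑σr)) *
      ((1 : Matrix (Fin n) (Fin n) ℝ).submatrix (⇑σr) id) = 1 := by
    have h := submatrix_mul_equiv (1 : Matrix (Fin n) (Fin n) ℝ) (1 : Matrix (Fin n) (Fin n) ℝ)
      id σr id
    simpa using h
  have hadjRr : ((1 : Matrix (Fin n) (Fin n) ℝ).submatrix id (⇑σr)).adjugate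
      = sr • ((1 : Matrix (Fin n) (Fin n) ℝ).submatrix (⇑σr) id) := by
    calc ((1 : Matrix (Fin n) (Fin n) ℝ).submatrix id (⇑σr)).adjugate
        = ((1 : Matrix (Fin n) (Fin n) ℝ).submatrix id (⇑σr)).adjugate *
          (((1 : Matrix (Fin n) (Fin n) ℝ).submatrix id (⇑σr)) *
            ((1 : Matrix (Fin n) (Fin n) ℝ).submatrix (⇑σr) id)) := by rw [hRr2, Matrix.mul_one]
      _ = (((1 : Matrix (Fin n) (Fin n) ℝ).submatrix id (⇑σr)).adjugate *
            ((1 : Matrix (Fin n) (Fin n) ℝ).submatrix id (⇑σr))) *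
            ((1 : Matrix (Fin n) (Fin n) ℝ).submatrix (⇑σr) id) := by rw [Matrix.mul_assoc]
      _ = sr • ((1 : Matrix (Fin n) (Fin n) ℝ).submatrix (⇑σr) id) := by
          rw [Matrix.adjugate_mul, hdetRr, Matrix.smul_mul, Matrix.one_mul]
  have hmul1 : ((1 : Matrix (Fin n) (Fin n) ℝ).submatrix (⇑σr) id) * A.adjugate
      = A.adjugate.submatrix (⇑σr) id := by
    have h := submatrix_mul_equiv (1 : Matrix (Fin n) (Fin n) ℝ) A.adjugate (⇑σr)
      (Equiv.refl (Fin n)) id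
    simpa using h
  have hmul2 : (A.adjugate.submatrix (⇑σr) id) * ((1 : Matrix (Fin n) (Fin n) ℝ).submatrix id (⇑σc))
      = A.adjugate.submatrix (⇑σr) (⇑σc) := by
    have h := submatrix_mul_equiv A.adjugate (1 : Matrix (Fin n) (Fin n) ℝ) (⇑σr)
      (Equiv.refl (Fin n)) (⇑σc)
    simpa using h
  have hadjN : N.adjugate = (sr * sc) • (A.adjugate.submatrix (⇑σr) (⇑σc)) := by
    rw [← hN2, ← hARr, adjugate_mul_distrib, adjugate_mul_distrib, hadjPc, hadjRr,
      Matrix.smul_mul, Matrix.mul_smul, Matrix.smul_mul, hmul1, hmul2,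
      smul_smul, mul_comm sc sr]
  set ι : Fin l → Fin n := fun i => e0 hl (Sum.inl i) with hι
  set κ : Fin (n - l) → Fin n := fun i => e0 hl (Sum.inr i) with hκ
  have hσrι : ∀ i, σr (ι i) = r i := fun i => permOf_e0 hr (Sum.inl i)
  have hσcι : ∀ i, σc (ι i) = c i := fun i => permOf_e0 hc (Sum.inl i)
  have hσrκ : ∀ i, σr (κ i) = complEnum r hr.injective i := fun i => permOf_e0 hr (Sum.inr i)
  have hσcκ : ∀ i, σc (κ i) = complEnum c hc.injective i := fun i => permOf_e0 hc (Sum.inr i)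
  have hsub1 : N.adjugate.submatrix ι ι = (sr * sc) • A.adjugate.submatrix r c := by
    rw [hadjN]
    ext i j
    simp [Matrix.submatrix_apply, hσrι, hσcι]
  have hsub2 : N.submatrix κ κ
      = A.submatrix (complEnum c hc.injective) (complEnum r hr.injective) := by
    ext i j
    simp [hN, Matrix.submatrix_apply, hσrκ, hσcκ]
  have hb := jacobi_diag hl N
  rw [hsub1, hsub2, hdetN, det_smul, Fintype.card_fin] at hb
  have hss : sr * sc ≠ 0 := by
    rcases hsr1 with h | h <;> rcases hsc1 with h' | h' <;> rw [h, h'] <;> norm_num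
  apply mul_left_cancel₀ (pow_ne_zero l hss)
  calc (sr * sc) ^ l * ((sr * sc) * A.det * (A.adjugate.submatrix r c).det)
      = (sr * sc * A.det) * ((sr * sc) ^ l * (A.adjugate.submatrix r c).det) := by ring
    _ = (sr * sc * A.det) ^ l *
        (A.submatrix (complEnum c hc.injective) (complEnum r hr.injective)).det := hb
    _ = (sr * sc) ^ l * (A.det ^ l *
        (A.submatrix (complEnum c hc.injective) (complEnum r hr.injective)).det) := by
      rw [mul_pow]; ring


end TPAux

attribute [-instance] Subtype.preorder Subtype.partialOrder Subtype.instLE Subtype.instLT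

namespace TPAux

section Phi

variable {m : ℕ}

lemma stuple_le_iff {n k : ℕ} (s t : STuple n k) : s ≤ t ↔ toLex s.1 ≤ toLex t.1 := Iff.rfl

lemma stuple_lt_iff {n k : ℕ} (s t : STuple n k) : s < t ↔ toLex s.1 < toLex t.1 := by
  rw [lt_iff_le_not_ge]; exact (lt_iff_le_not_ge (α := Lex (Fin k → Fin n))).symm

lemma lex_lt_of_succAbove {p q : Fin (m + 1)} (h : q < p) :
    toLex (Fin.succAbove p) < toLex (Fin.succAbove q) := by
  have hq : (q : ℕ) < m := by
    have hp := p.2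
    have := Fin.lt_def.mp h
    omega
  refine ⟨⟨(q : ℕ), hq⟩, fun j hj => ?_, ?_⟩
  · have hjq : (j : ℕ) < (q : ℕ) := hj
    show p.succAbove j = q.succAbove j
    rw [Fin.succAbove_of_castSucc_lt, Fin.succAbove_of_castSucc_lt]
    · rw [Fin.lt_def]; simpa using hjq
    · rw [Fin.lt_def]
      have := Fin.lt_def.mp h
      simp only [Fin.coe_castSucc]
      omega
  · show p.succAbove ⟨(q : ℕ), hq⟩ < q.succAbove ⟨(q : ℕ), hq⟩
    rw [Fin.succAbove_of_castSucc_lt, Fin.succAbove_of_le_castSucc]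
    · rw [Fin.lt_def]; simp
    · rw [Fin.le_def]; simp
    · rw [Fin.lt_def]
      have := Fin.lt_def.mp h
      simpa using this

/-- The bijection sending `a` to the `(n-1)`-subset missing `a.rev`. -/
noncomputable def phi (a : Fin (m + 1)) : STuple (m + 1) m :=
  ⟨Fin.succAbove a.rev, Fin.strictMono_succAbove a.rev⟩

lemma phi_strictMono : StrictMono (phi (m := m)) := by
  intro a b hab
  rw [stuple_lt_iff]
  exact lex_lt_of_succAbove (by rwa [Fin.rev_lt_rev])

lemma phi_surjective : Function.Surjective (phi (m := m)) := by
  rintro ⟨g, hg⟩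
  classical
  have hcard : ((Finset.univ.image g)ᶜ : Finset (Fin (m + 1))).card = 1 := by
    rw [Finset.card_compl, Finset.card_image_of_injective _ hg.injective]
    simp
  obtain ⟨x, hx⟩ := Finset.card_eq_one.mp hcard
  have hrange : Set.range g = Set.range x.succAbove := by
    rw [Fin.range_succAbove]
    ext y
    constructor
    · rintro ⟨i, rfl⟩ hyx
      have : g i ∈ (Finset.univ.image g) := Finset.mem_image_of_mem g (Finset.mem_univ i)
      have hmem : g i ∉ ((Finset.univ.image g)ᶜ : Finset (Fin (m + 1))) := by
        simp [this]
      rw [hx] at hmem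
      simp at hmem
      exact hmem hyx
    · intro hy
      by_contra hcon
      have : y ∈ ((Finset.univ.image g)ᶜ : Finset (Fin (m + 1))) := by
        simp only [Finset.mem_compl, Finset.mem_image]
        push_neg
        intro i _
        exact fun h => hcon ⟨i, h⟩
      rw [hx] at this
      simp at this
      exact hy this
  haveI : WellFoundedLT (Fin m) := Finite.to_wellFoundedLT
  have hgx : g = x.succAbove :=
    (hg.range_inj (Fin.strictMono_succAbove x)).mp hrange
  exact ⟨x.rev, Subtype.ext (by simp [phi, Fin.rev_rev, hgx])⟩

/-- `phi` as an order isomorphism. -/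
noncomputable def phiIso : Fin (m + 1) ≃o STuple (m + 1) m :=
  StrictMono.orderIsoOfSurjective phi phi_strictMono phi_surjective

lemma phiIso_apply (a : Fin (m + 1)) : phiIso a = phi a := rfl

lemma det_submatrix_succAbove (B : Matrix (Fin (m + 1)) (Fin (m + 1)) ℝ) (u v : Fin (m + 1)) :
    (B.submatrix u.succAbove v.succAbove).det
      = (-1 : ℝ) ^ ((u : ℕ) + (v : ℕ)) * B.adjugate v u := by
  have h := Matrix.adjugate_fin_succ_eq_det_submatrix B v u
  rw [h, ← mul_assoc, ← pow_add, Even.neg_one_pow ⟨(u : ℕ) + (v : ℕ), by ring⟩, one_mul]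

end Phi

end TPAux

open TPAux in
/-- If `A` is an `n×n` totally positive matrix, then its `(n-1)`st compound
matrix is totally positive. -/
theorem compound_pred_totallyPos {n : ℕ} (A : Matrix (Fin n) (Fin n) ℝ)
    (hA : IsTP A) : IsTP (compound A (n - 1)) := by
  intro l r c hrs hcs
  rcases Nat.eq_zero_or_pos l with rfl | hl
  · simpa using Matrix.det_isEmpty (A := (compound A (n - 1)).submatrix r c)
  rcases n with _ | m
  · -- n = 0 : the compound is the 1×1 matrix (1)
    have hsub : Subsingleton (STuple 0 (0 - 1)) := by
      constructor
      rintro ⟨f, hf⟩ ⟨g, hg⟩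
      exact Subtype.ext (Subsingleton.elim f g)
    have hl1 : l = 1 := by
      by_contra hne
      have h2 : 2 ≤ l := by omega
      have h01 : (⟨0, by omega⟩ : Fin l) < ⟨1, by omega⟩ := by simp [Fin.lt_def]
      exact ne_of_lt (hrs h01) (Subsingleton.elim _ _)
    subst hl1
    rw [Matrix.det_fin_one]
    have hentry : ((compound A (0 - 1)).submatrix r c) 0 0
        = (A.submatrix (r 0).1 (c 0).1).det := rfl
    haveI : IsEmpty (Fin (0 - 1)) := Fin.isEmpty
    rw [hentry, Matrix.det_isEmpty]
    norm_num
  · -- n = m + 1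
    have hdetA : 0 < A.det := by
      have := hA (m + 1) id id strictMono_id strictMono_id
      simpa using this
    -- transport the row/column selections to `Fin (m+1)`
    set rt : Fin l → Fin (m + 1) := fun a => phiIso.symm (r a) with hrt
    set ct : Fin l → Fin (m + 1) := fun a => phiIso.symm (c a) with hct
    have hrts : StrictMono rt := fun a b hab => phiIso.symm.strictMono (hrs hab)
    have hcts : StrictMono ct := fun a b hab => phiIso.symm.strictMono (hcs hab)
    have hrphi : ∀ a, r a = phi (rt a) := fun a => by
      rw [hrt, ← phiIso_apply, OrderIso.apply_symm_apply]
    have hcphi : ∀ a, c a = phi (ct a) := fun a => by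
      rw [hct, ← phiIso_apply, OrderIso.apply_symm_apply]
    set uh : Fin l → Fin (m + 1) := fun a => (rt (Fin.rev a)).rev with huh
    set vh : Fin l → Fin (m + 1) := fun a => (ct (Fin.rev a)).rev with hvh
    have huhs : StrictMono uh := by
      intro a b hab
      show (rt (Fin.rev a)).rev < (rt (Fin.rev b)).rev
      rw [Fin.rev_lt_rev]
      exact hrts (Fin.rev_lt_rev.mpr hab)
    have hvhs : StrictMono vh := by
      intro a b hab
      show (ct (Fin.rev a)).rev < (ct (Fin.rev b)).rev
      rw [Fin.rev_lt_rev]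
      exact hcts (Fin.rev_lt_rev.mpr hab)
    -- the reversed minor matrix, with signs extracted
    have hXeq : ((compound A (m + 1 - 1)).submatrix r c).submatrix
          (⇑(Fin.revPerm (n := l))) (⇑(Fin.revPerm (n := l)))
        = Matrix.of (fun a b => ((-1 : ℝ)) ^ ((uh a : ℕ)) *
            (Matrix.of (fun a' b' => ((-1 : ℝ)) ^ ((vh b' : ℕ)) *
              ((A.adjugate.submatrix vh uh)ᵀ a' b')) a b)) := by
      ext a b
      show (compound A (m + 1 - 1)) (r (Fin.rev a)) (c (Fin.rev b)) = _
      rw [hrphi, hcphi]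
      show (A.submatrix (Fin.succAbove (rt (Fin.rev a)).rev)
        (Fin.succAbove (ct (Fin.rev b)).rev)).det = _
      rw [show (rt (Fin.rev a)).rev = uh a from rfl, show (ct (Fin.rev b)).rev = vh b from rfl,
        det_submatrix_succAbove, pow_add]
      simp only [Matrix.of_apply, Matrix.transpose_apply, Matrix.submatrix_apply]
      ring
    have hdetM : ((compound A (m + 1 - 1)).submatrix r c).det
        = ((-1 : ℝ) ^ (∑ a, (uh a : ℕ))) * ((-1 : ℝ) ^ (∑ b, (vh b : ℕ))) *
          (A.adjugate.submatrix vh uh).det := by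
      rw [← Matrix.det_submatrix_equiv_self (Fin.revPerm (n := l)), hXeq,
        Matrix.det_mul_column, Matrix.det_mul_row, Matrix.det_transpose,
        Finset.prod_pow_eq_pow_sum, Finset.prod_pow_eq_pow_sum]
      ring
    -- Jacobi's identity
    have hkey := jacobi A hvhs huhs
    -- positivity of the complementary minor
    have hD : 0 < (A.submatrix (complEnum uh huhs.injective)
        (complEnum vh hvhs.injective)).det :=
      hA _ _ _ (complEnum_strictMono _ _) (complEnum_strictMono _ _)
    set D := (A.submatrix (complEnum uh huhs.injective) (complEnum vh hvhs.injective)).det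
    set s : ℝ := ((Equiv.Perm.sign (permOf hvhs) : ℤ) : ℝ) * ((Equiv.Perm.sign (permOf huhs) : ℤ) : ℝ)
      with hs
    -- compute the signs
    have hsu : ((Equiv.Perm.sign (permOf huhs) : ℤ) : ℝ)
        = (-1 : ℝ) ^ (∑ i, ((uh i : ℕ) - (i : ℕ))) := by
      rw [sign_permOf huhs]; push_cast; ring
    have hsv : ((Equiv.Perm.sign (permOf hvhs) : ℤ) : ℝ)
        = (-1 : ℝ) ^ (∑ i, ((vh i : ℕ) - (i : ℕ))) := by
      rw [sign_permOf hvhs]; push_cast; ring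
    have hsumu : (∑ a, (uh a : ℕ)) = (∑ i, ((uh i : ℕ) - (i : ℕ))) + ∑ i : Fin l, (i : ℕ) := by
      rw [← Finset.sum_add_distrib]
      exact Finset.sum_congr rfl fun i _ => by have := le_apply huhs i; omega
    have hsumv : (∑ a, (vh a : ℕ)) = (∑ i, ((vh i : ℕ) - (i : ℕ))) + ∑ i : Fin l, (i : ℕ) := by
      rw [← Finset.sum_add_distrib]
      exact Finset.sum_congr rfl fun i _ => by have := le_apply hvhs i; omega
    have hsign : ((-1 : ℝ) ^ (∑ a, (uh a : ℕ))) * ((-1 : ℝ) ^ (∑ b, (vh b : ℕ))) * s = 1 := by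
      rw [hs, hsu, hsv, hsumu, hsumv, ← pow_add, ← pow_add, ← pow_add]
      exact Even.neg_one_pow ⟨(∑ i, ((uh i : ℕ) - (i : ℕ))) + (∑ i, ((vh i : ℕ) - (i : ℕ)))
        + ∑ i : Fin l, (i : ℕ), by ring⟩
    -- extract the adjugate minor from Jacobi's identity
    have hpow : A.det ^ l = A.det * A.det ^ (l - 1) := by
      rw [← pow_succ']
      congr 1
      omega
    have hZ : (A.adjugate.submatrix vh uh).det = s * (A.det ^ (l - 1) * D) := by
      have hs2 : s * s = 1 := by
        rw [hs]
        rcases Int.units_eq_one_or (Equiv.Perm.sign (permOf hvhs)) with h1 | h1 <;>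
          rcases Int.units_eq_one_or (Equiv.Perm.sign (permOf huhs)) with h2 | h2 <;>
            rw [h1, h2] <;> norm_num
      apply mul_left_cancel₀ (ne_of_gt hdetA)
      have := hkey
      rw [hpow] at this
      calc A.det * (A.adjugate.submatrix vh uh).det
          = s * (s * A.det * (A.adjugate.submatrix vh uh).det) := by
            rw [← mul_assoc, ← mul_assoc, hs2, one_mul]
        _ = s * (A.det * (A.det ^ (l - 1) * D)) := by rw [hkey, hpow]; ring
        _ = A.det * (s * (A.det ^ (l - 1) * D)) := by ring
    have hfin : ((-1 : ℝ) ^ (∑ a, (uh a : ℕ))) * ((-1 : ℝ) ^ (∑ b, (vh b : ℕ))) *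
        (s * (A.det ^ (l - 1) * D)) = A.det ^ (l - 1) * D := by
      calc ((-1 : ℝ) ^ (∑ a, (uh a : ℕ))) * ((-1 : ℝ) ^ (∑ b, (vh b : ℕ))) *
          (s * (A.det ^ (l - 1) * D))
          = (((-1 : ℝ) ^ (∑ a, (uh a : ℕ))) * ((-1 : ℝ) ^ (∑ b, (vh b : ℕ))) * s) *
            (A.det ^ (l - 1) * D) := by ring
        _ = A.det ^ (l - 1) * D := by rw [hsign, one_mul]
    rw [hdetM, hZ, hfin]
    positivity
end

section
/- If A is an n-by-n totally positive matrix and S = diag(1,-1,1,...,(-1)^{n-1}), then S A^{-1} S is totally positive. -/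
open Matrix

open Matrix

section Aux

-- Block Jacobi: principal case over sum types
lemma blockJacobi {k m : ℕ} (X Y : Matrix (Fin k ⊕ Fin m) (Fin k ⊕ Fin m) ℝ)
    (h : X * Y = 1) :
    X.det * (Y.submatrix Sum.inl Sum.inl).det = (X.submatrix Sum.inr Sum.inr).det := by
  set X11 := X.toBlocks₁₁; set X12 := X.toBlocks₁₂; set X21 := X.toBlocks₂₁; set X22 := X.toBlocks₂₂
  set Y11 := Y.toBlocks₁₁; set Y12 := Y.toBlocks₁₂; set Y21 := Y.toBlocks₂₁; set Y22 := Y.toBlocks₂₂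
  have hX : X = fromBlocks X11 X12 X21 X22 := (fromBlocks_toBlocks X).symm
  have hY : Y = fromBlocks Y11 Y12 Y21 Y22 := (fromBlocks_toBlocks Y).symm
  have h' : fromBlocks (X11*Y11 + X12*Y21) (X11*Y12 + X12*Y22)
      (X21*Y11 + X22*Y21) (X21*Y12 + X22*Y22) = fromBlocks 1 0 0 1 := by
    rw [← fromBlocks_multiply, ← hX, ← hY, h, fromBlocks_one]
  have e11 : X11*Y11 + X12*Y21 = 1 := by
    have := congrArg Matrix.toBlocks₁₁ h'; simpa only [toBlocks_fromBlocks₁₁] using this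
  have e21 : X21*Y11 + X22*Y21 = 0 := by
    have := congrArg Matrix.toBlocks₂₁ h'; simpa only [toBlocks_fromBlocks₂₁] using this
  have key : X * fromBlocks Y11 0 Y21 1 = fromBlocks 1 X12 0 X22 := by
    rw [hX, fromBlocks_multiply]
    congr 1 <;> simp [e11, e21]
  have hdet := congrArg Matrix.det key
  rw [det_mul, det_fromBlocks_zero₁₂, det_fromBlocks_zero₂₁, det_one, det_one, mul_one, one_mul] at hdet
  have h1 : Y.submatrix Sum.inl Sum.inl = Y11 := rfl
  have h2 : X.submatrix Sum.inr Sum.inr = X22 := rfl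
  rw [h1, h2]; exact hdet


lemma val_sub_of_le' {n : ℕ} (a b : Fin n) (h : b.1 ≤ a.1) : (a - b).1 = a.1 - b.1 := by
  have hn := a.2
  rw [Fin.sub_def]
  change (n - b.1 + a.1) % n = _
  rw [Nat.mod_eq_sub_mod (by omega), Nat.mod_eq_of_lt (by omega)]
  omega

lemma val_sub_of_gt' {n : ℕ} (a b : Fin n) (h : a.1 < b.1) : (a - b).1 = a.1 + n - b.1 := by
  have hn := b.2
  rw [Fin.sub_def]
  change (n - b.1 + a.1) % n = _
  rw [Nat.mod_eq_of_lt (by omega)]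
  omega

lemma val_add_of_lt' {n : ℕ} (a b : Fin n) (h : a.1 + b.1 < n) : (a + b).1 = a.1 + b.1 := by
  rw [Fin.add_def]
  exact Nat.mod_eq_of_lt h

lemma exists_sigma : ∀ (k : ℕ) {n : ℕ} (r : Fin k → Fin n), StrictMono r →
    ∃ σ : Equiv.Perm (Fin n),
      (∀ (i : ℕ) (hik : i < k) (hin : i < n), σ ⟨i, hin⟩ = r ⟨i, hik⟩) ∧
      (∀ a b : Fin n, k ≤ a.1 → a < b → σ a < σ b) ∧
      Equiv.Perm.sign σ = (-1) ^ (∑ i : Fin k, ((r i : ℕ) + (i : ℕ))) := by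
  intro k
  induction k with
  | zero =>
    intro n r hr
    exact ⟨1, fun i hik _ => absurd hik (by omega), fun a b _ h => h, by simp⟩
  | succ k ih =>
    intro n r hr
    obtain ⟨σ', h1, h2, h3⟩ := ih (fun i => r i.castSucc) (hr.comp Fin.strictMono_castSucc)
    have hkn : k + 1 ≤ n := by
      have := Fintype.card_le_of_injective r hr.injective
      simpa using this
    obtain ⟨n', rfl⟩ : ∃ n', n = n' + 1 := ⟨n - 1, by omega⟩
    set rk : Fin (n' + 1) := r (Fin.last k) with hrk
    set p : Fin (n' + 1) := σ'.symm rk with hpdef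
    have hσp : σ' p = rk := σ'.apply_symm_apply rk
    have hpk : k ≤ p.1 := by
      by_contra hlt
      push_neg at hlt
      have h5 : σ' p = r (Fin.castSucc ⟨p.1, hlt⟩) := by
        have := h1 p.1 hlt p.2
        simpa using this
      rw [hσp] at h5
      have h6 := hr.injective h5
      have := congrArg Fin.val h6
      simp only [Fin.val_last, Fin.coe_castSucc] at this
      omega
    have hcount : ∀ j : Fin (n' + 1), σ' j < rk ↔ j < p := by
      intro j
      rcases lt_or_ge j.1 k with hj | hj
      · constructor
        · intro _; exact Fin.lt_def.2 (lt_of_lt_of_le hj hpk)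
        · intro _
          have hje : σ' j = r (Fin.castSucc ⟨j.1, hj⟩) := by
            have := h1 j.1 hj j.2; simpa using this
          rw [hje]
          apply hr
          rw [Fin.lt_def]
          simp only [Fin.coe_castSucc, Fin.val_last]
          omega
      · constructor
        · intro hlt
          rcases lt_trichotomy j p with h | h | h
          · exact h
          · rw [h, hσp] at hlt; exact absurd hlt (lt_irrefl _)
          · exact absurd (h2 p j hpk h) (by rw [hσp]; exact not_lt.2 hlt.le)
        · intro hlt
          have := h2 j p hj hlt
          rwa [hσp] at this
    have hp : p.1 = rk.1 := by
      have hfe : Finset.univ.filter (fun j : Fin (n' + 1) => σ' j < rk)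
          = (Finset.Iio rk).map σ'.symm.toEmbedding := by
        ext j
        simp only [Finset.mem_filter, Finset.mem_univ, true_and, Finset.mem_map,
          Finset.mem_Iio, Equiv.coe_toEmbedding]
        constructor
        · intro h; exact ⟨σ' j, h, σ'.symm_apply_apply j⟩
        · rintro ⟨y, hy, rfl⟩; rwa [σ'.apply_symm_apply]
      have hfe2 : Finset.univ.filter (fun j : Fin (n' + 1) => σ' j < rk) = Finset.Iio p := by
        ext j
        simp [hcount j]
      have heq := hfe2 ▸ hfe
      have hc := congrArg Finset.card heq
      rw [Finset.card_map, Fin.card_Iio, Fin.card_Iio] at hc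
      exact hc
    set κ : Fin (n' + 1) := ⟨k, by omega⟩ with hκ
    set d : Fin (n' + 1) := p - κ with hddef
    have hκv : κ.1 = k := rfl
    have hd : d.1 = p.1 - k := val_sub_of_le' p κ hpk
    set τ : Equiv.Perm (Fin (n' + 1)) :=
      (Equiv.addLeft κ) * (Fin.cycleRange d)⁻¹ * (Equiv.addLeft κ)⁻¹ with hτ
    have tau_apply : ∀ x : Fin (n' + 1), τ x = κ + (Fin.cycleRange d).symm (x - κ) := by
      intro x
      simp [hτ, Equiv.Perm.mul_apply, Equiv.Perm.inv_def, sub_eq_neg_add]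
    have hpn : p.1 < n' + 1 := p.2
    have tauval : ∀ x : Fin (n' + 1),
        (τ x).1 = if x.1 < k then x.1 else if x.1 = k then p.1
          else if x.1 ≤ p.1 then x.1 - 1 else x.1 := by
      intro x
      rcases lt_or_ge x.1 k with hx | hx
      · have hy : (x - κ).1 = x.1 + (n' + 1) - k := val_sub_of_gt' x κ hx
        have hgt : d < x - κ := by rw [Fin.lt_def, hd, hy]; omega
        have hfix : Fin.cycleRange d (x - κ) = x - κ := Fin.cycleRange_of_gt hgt
        have h2' : (Fin.cycleRange d).symm (x - κ) = x - κ := by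
          conv_lhs => rw [← hfix]
          exact (Fin.cycleRange d).symm_apply_apply _
        rw [tau_apply, h2', if_pos hx]
        exact congrArg Fin.val (by abel)
      rcases eq_or_lt_of_le hx with hx2 | hx2
      · have hxκ : x = κ := Fin.ext hx2.symm
        have h0 : x - κ = 0 := by rw [hxκ, sub_self]
        have hs : (Fin.cycleRange d).symm 0 = d := by
          conv_lhs => rw [← Fin.cycleRange_self d]
          exact (Fin.cycleRange d).symm_apply_apply _
        rw [tau_apply, h0, hs, if_neg (by omega), if_pos hx2.symm,
          val_add_of_lt' κ d (by omega)]
        omega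
      rcases le_or_gt x.1 p.1 with hxp | hxp
      · have hy : (x - κ).1 = x.1 - k := val_sub_of_le' x κ (by omega)
        set z : Fin (n' + 1) := ⟨x.1 - k - 1, by omega⟩ with hz
        have hzd : z < d := by rw [Fin.lt_def, hd]; show x.1 - k - 1 < p.1 - k; omega
        have hc : Fin.cycleRange d z = z + 1 := Fin.cycleRange_of_lt hzd
        have hone : (1 : Fin (n' + 1)).1 = 1 := by
          rw [Fin.val_one']
          exact Nat.mod_eq_of_lt (by omega)
        have hz1 : z + 1 = x - κ := by
          apply Fin.ext
          rw [val_add_of_lt' z 1 (by rw [hone]; show x.1 - k - 1 + 1 < n' + 1; omega), hone, hy]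
          show x.1 - k - 1 + 1 = x.1 - k
          omega
        have h2' : (Fin.cycleRange d).symm (x - κ) = z := by
          rw [← hz1, ← hc]
          exact (Fin.cycleRange d).symm_apply_apply _
        rw [tau_apply, h2', if_neg (by omega), if_neg (by omega), if_pos hxp,
          val_add_of_lt' κ z (by show k + (x.1 - k - 1) < n' + 1; omega)]
        show k + (x.1 - k - 1) = x.1 - 1
        omega
      · have hy : (x - κ).1 = x.1 - k := val_sub_of_le' x κ (by omega)
        have hgt : d < x - κ := by rw [Fin.lt_def, hd, hy]; omega
        have hfix : Fin.cycleRange d (x - κ) = x - κ := Fin.cycleRange_of_gt hgt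
        have h2' : (Fin.cycleRange d).symm (x - κ) = x - κ := by
          conv_lhs => rw [← hfix]
          exact (Fin.cycleRange d).symm_apply_apply _
        rw [tau_apply, h2', if_neg (by omega), if_neg (by omega), if_neg (by omega)]
        exact congrArg Fin.val (by abel)
    have hsignτ : Equiv.Perm.sign τ = (-1 : ℤˣ) ^ (rk.1 - k) := by
      rw [hτ, _root_.map_mul, _root_.map_mul, _root_.map_inv, _root_.map_inv,
        mul_right_comm, mul_inv_cancel, one_mul, Fin.sign_cycleRange, hd, hp]
      simp
    refine ⟨σ' * τ, ?_, ?_, ?_⟩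
    · intro i hik hin
      rcases lt_or_ge i k with hik' | hik'
      · have hτi : τ ⟨i, hin⟩ = ⟨i, hin⟩ := by
          apply Fin.ext
          rw [tauval]
          simp only [if_pos hik']
        show σ' (τ ⟨i, hin⟩) = r ⟨i, hik⟩
        rw [hτi, h1 i hik' hin]
        exact congrArg r (Fin.ext rfl)
      · have hik2 : i = k := by omega
        subst hik2
        have hτi : τ ⟨i, hin⟩ = p := by
          apply Fin.ext
          rw [tauval]
          simp
        show σ' (τ ⟨i, hin⟩) = r ⟨i, hik⟩
        rw [hτi, hσp, hrk]
        congr 1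
    · intro a b ha hab
      show σ' (τ a) < σ' (τ b)
      have hva := tauval a
      have hvb := tauval b
      apply h2
      · rw [hva]
        split_ifs <;> omega
      · rw [Fin.lt_def, hva, hvb]
        have hab' : a.1 < b.1 := hab
        split_ifs <;> omega
    · rw [_root_.map_mul, h3, hsignτ, Fin.sum_univ_castSucc]
      have hrkk : k ≤ rk.1 := hp ▸ hpk
      have hpow : (-1 : ℤˣ) ^ ((rk.1 : ℕ) - k) = (-1) ^ ((rk.1 : ℕ) + k) := by
        have he : (rk.1 : ℕ) + k = ((rk.1 : ℕ) - k) + 2 * k := by omega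
        rw [he, pow_add, pow_mul]
        norm_num
      rw [hpow, ← pow_add]
      congr 1

end Aux

/-- If `A` is totally positive and `S = diag(1, -1, …, (-1)^(n-1))`, then
`S A⁻¹ S` is totally positive. -/
theorem SAinvS_totallyPos {n : ℕ} (A : Matrix (Fin n) (Fin n) ℝ) (hA : IsTP A) :
    IsTP ((Matrix.diagonal fun i : Fin n => (-1 : ℝ) ^ (i : ℕ)) * A⁻¹ *
      (Matrix.diagonal fun i : Fin n => (-1 : ℝ) ^ (i : ℕ))) := by
  intro l r c hr hc
  set B := A⁻¹ with hB
  have hdetA : 0 < A.det := by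
    have := hA n id id strictMono_id strictMono_id
    simpa using this
  have hAB : A * B = 1 := Matrix.mul_nonsing_inv A (isUnit_iff_ne_zero.mpr hdetA.ne')
  have hl : l ≤ n := by
    have := Fintype.card_le_of_injective r hr.injective
    simpa using this
  obtain ⟨σr, hr1, hr2, hr3⟩ := exists_sigma l r hr
  obtain ⟨σc, hc1, hc2, hc3⟩ := exists_sigma l c hc
  set m := n - l with hmdef
  have hm : l + m = n := by omega
  set e : Fin l ⊕ Fin m ≃ Fin n := finSumFinEquiv.trans (finCongr hm) with hedef
  have heinl : ∀ i : Fin l, (e (Sum.inl i)).1 = i.1 := by intro i; simp [hedef]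
  have heinr : ∀ j : Fin m, (e (Sum.inr j)).1 = l + j.1 := by intro j; simp [hedef]
  set ρr : Fin l ⊕ Fin m ≃ Fin n := e.trans σr with hρr
  set ρc : Fin l ⊕ Fin m ≃ Fin n := e.trans σc with hρc
  set X := A.submatrix ρc ρr with hX
  set Y := B.submatrix ρr ρc with hY
  have hXY : X * Y = 1 := by
    rw [hX, hY, Matrix.submatrix_mul_equiv, hAB, Matrix.submatrix_one_equiv]
  have hblock := blockJacobi X Y hXY
  -- identify Y-block with B.submatrix r c
  have hρrl : ∀ i : Fin l, ρr (Sum.inl i) = r i := by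
    intro i
    have h0 : e (Sum.inl i) = ⟨i.1, by omega⟩ := Fin.ext (heinl i)
    have := hr1 i.1 i.2 (by omega)
    simp only [hρr, Equiv.trans_apply, h0, this]
  have hρcl : ∀ i : Fin l, ρc (Sum.inl i) = c i := by
    intro i
    have h0 : e (Sum.inl i) = ⟨i.1, by omega⟩ := Fin.ext (heinl i)
    have := hc1 i.1 i.2 (by omega)
    simp only [hρc, Equiv.trans_apply, h0, this]
  have hYsub : Y.submatrix Sum.inl Sum.inl = B.submatrix r c := by
    ext i j
    simp only [hY, Matrix.submatrix_apply, hρrl i, hρcl j]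
  -- complements
  set rbar : Fin m → Fin n := fun j => ρr (Sum.inr j) with hrbar
  set cbar : Fin m → Fin n := fun j => ρc (Sum.inr j) with hcbar
  have hrbarmono : StrictMono rbar := by
    intro a b hab
    exact hr2 (e (Sum.inr a)) (e (Sum.inr b)) (by rw [heinr]; omega)
      (by rw [Fin.lt_def, heinr, heinr]; exact by omega)
  have hcbarmono : StrictMono cbar := by
    intro a b hab
    exact hc2 (e (Sum.inr a)) (e (Sum.inr b)) (by rw [heinr]; omega)
      (by rw [Fin.lt_def, heinr, heinr]; exact by omega)
  have hXsub : X.submatrix Sum.inr Sum.inr = A.submatrix cbar rbar := rfl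
  -- determinant of X
  have hdetX : X.det = (((Equiv.Perm.sign σc : ℤ) : ℝ) * ((Equiv.Perm.sign σr : ℤ) : ℝ)) * A.det := by
    have h1 : X = ((A.submatrix (σc : Fin n → Fin n) id).submatrix (id : Fin n → Fin n) (σr : Fin n → Fin n)).submatrix e e := by
      rw [hX, Matrix.submatrix_submatrix, Matrix.submatrix_submatrix]
      rfl
    rw [h1, Matrix.det_submatrix_equiv_self, Matrix.det_permute', Matrix.det_permute]
    push_cast
    ring
  -- positivity of complementary minor
  have hcomp : 0 < (A.submatrix cbar rbar).det := hA m cbar rbar hcbarmono hrbarmono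
  -- LHS expansion
  have hLHS : ((((Matrix.diagonal fun i : Fin n => (-1 : ℝ) ^ (i : ℕ)) * B *
      (Matrix.diagonal fun i : Fin n => (-1 : ℝ) ^ (i : ℕ))).submatrix r c)).det
      = ((-1 : ℝ) ^ (∑ i : Fin l, (r i : ℕ)) * (-1 : ℝ) ^ (∑ j : Fin l, (c j : ℕ)))
        * (B.submatrix r c).det := by
    have hentry : ((Matrix.diagonal fun i : Fin n => (-1 : ℝ) ^ (i : ℕ)) * B *
        (Matrix.diagonal fun i : Fin n => (-1 : ℝ) ^ (i : ℕ))).submatrix r c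
        = Matrix.of (fun i j => (-1 : ℝ) ^ (r i : ℕ) *
            ((Matrix.of fun i j => (-1 : ℝ) ^ (c j : ℕ) * (B.submatrix r c) i j) i j)) := by
      ext i j
      simp [Matrix.mul_diagonal, Matrix.diagonal_mul]
      ring
    rw [hentry, Matrix.det_mul_column, Matrix.det_mul_row]
    rw [Finset.prod_pow_eq_pow_sum, Finset.prod_pow_eq_pow_sum]
    ring
  rw [hLHS]
  -- combine everything
  rw [hYsub, hXsub, hdetX] at hblock
  rw [hr3] at hblock
  rw [hc3] at hblock
  set t := ∑ i : Fin l, (r i : ℕ) with ht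
  set u := ∑ j : Fin l, (c j : ℕ) with hu
  set s := ∑ i : Fin l, (i : ℕ) with hs
  have hsumr : ∑ i : Fin l, ((r i : ℕ) + (i : ℕ)) = t + s := by
    rw [ht, hs, Finset.sum_add_distrib]
  have hsumc : ∑ i : Fin l, ((c i : ℕ) + (i : ℕ)) = u + s := by
    rw [hu, hs, Finset.sum_add_distrib]
  rw [hsumr, hsumc] at hblock
  have hcast : ∀ a : ℕ, (((((-1 : ℤˣ) ^ a) : ℤˣ) : ℤ) : ℝ) = (-1 : ℝ) ^ a := by
    intro a
    push_cast
    norm_num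
  rw [hcast, hcast] at hblock
  -- now hblock : ((-1)^(u+s) * (-1)^(t+s)) * A.det * (B.submatrix r c).det = (A.submatrix cbar rbar).det
  have hsq : ∀ a : ℕ, (-1 : ℝ) ^ a * (-1 : ℝ) ^ a = 1 := by
    intro a
    rw [← pow_add]
    exact Even.neg_one_pow ⟨a, by ring⟩
  have hts := hsq (t + s)
  have hus := hsq (u + s)
  have hss := hsq s
  have key : ((-1 : ℝ) ^ t * (-1 : ℝ) ^ u) * (B.submatrix r c).det * A.det
      = (A.submatrix cbar rbar).det := by
    have e1 : (-1 : ℝ) ^ (t + s) = (-1 : ℝ) ^ t * (-1 : ℝ) ^ s := pow_add _ _ _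
    have e2 : (-1 : ℝ) ^ (u + s) = (-1 : ℝ) ^ u * (-1 : ℝ) ^ s := pow_add _ _ _
    rw [e1, e2] at hblock
    have hst := hsq t
    have hsu := hsq u
    nlinarith [hblock, hss, hst, hsu]
  have : 0 < ((-1 : ℝ) ^ t * (-1 : ℝ) ^ u) * (B.submatrix r c).det := by
    by_contra hneg
    push_neg at hneg
    nlinarith [key, hcomp, hdetA]
  exact this
end

section
/- For an n-by-n real matrix A, the entries of the kth Dodgson condensation matrix D_k(A) are the contiguous minors of order k+1: the (i,j) entry of D_k(A) equals det A[{i,i+1,...,i+k},{j,j+1,...,j+k}] for 1 ≤ i,j ≤ n-k (assuming all intermediate contiguous minors used as divisors are nonzero). -/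
open Matrix

open Matrix

/-- Entry of `A` at (0-indexed) natural positions, `0` out of range. -/
noncomputable def ent {n : ℕ} (A : Matrix (Fin n) (Fin n) ℝ) (i j : ℕ) : ℝ :=
  if h : i < n ∧ j < n then A ⟨i, h.1⟩ ⟨j, h.2⟩ else 0

/-- `condm A k i j` is the `(i,j)` entry (0-indexed) of the `k`-th Dodgson
condensation matrix of `A`, defined recursively by Dodgson's algorithm. -/
noncomputable def condm {n : ℕ} (A : Matrix (Fin n) (Fin n) ℝ) : ℕ → ℕ → ℕ → ℝ
  | 0, i, j => ent A i j
  | 1, i, j => ent A i j * ent A (i + 1) (j + 1) - ent A i (j + 1) * ent A (i + 1) j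
  | (k + 2), i, j =>
      (condm A (k + 1) i j * condm A (k + 1) (i + 1) (j + 1)
        - condm A (k + 1) i (j + 1) * condm A (k + 1) (i + 1) j) / condm A k (i + 1) (j + 1)


lemma desnanot_jacobi {m : ℕ} (M : Matrix (Fin (m+2)) (Fin (m+2)) ℝ)
    (hE : (M.submatrix (fun p : Fin m => (⟨p.1+1, by omega⟩ : Fin (m+2)))
                       (fun p : Fin m => (⟨p.1+1, by omega⟩ : Fin (m+2)))).det ≠ 0) :
    M.det * (M.submatrix (fun p : Fin m => (⟨p.1+1, by omega⟩ : Fin (m+2)))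
                         (fun p : Fin m => (⟨p.1+1, by omega⟩ : Fin (m+2)))).det
      = (M.submatrix Fin.castSucc Fin.castSucc).det * (M.submatrix Fin.succ Fin.succ).det
        - (M.submatrix Fin.castSucc Fin.succ).det * (M.submatrix Fin.succ Fin.castSucc).det := by
  classical
  set ip : Fin m → Fin (m+2) := fun p => ⟨p.1+1, by omega⟩ with hip
  set bd : Fin 2 → Fin (m+2) := ![⟨0, by omega⟩, ⟨m+1, by omega⟩] with hbd
  set E : Matrix (Fin m) (Fin m) ℝ := M.submatrix ip ip with hEdef
  set B : Matrix (Fin m) (Fin 2) ℝ := M.submatrix ip bd with hBdef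
  set C : Matrix (Fin 2) (Fin m) ℝ := M.submatrix bd ip with hCdef
  set D : Matrix (Fin 2) (Fin 2) ℝ := M.submatrix bd bd with hDdef
  haveI hEinv : Invertible E := E.invertibleOfIsUnitDet (isUnit_iff_ne_zero.mpr hE)
  set S : Matrix (Fin 2) (Fin 2) ℝ := D - C * ⅟E * B with hSdef
  -- the big equivalence
  have hinj : Function.Injective (Sum.elim ip bd) := by
    rintro (p | a) (q | b) h <;>
      simp only [Sum.elim_inl, Sum.elim_inr, Fin.ext_iff, hip, hbd] at h ⊢
    · exact congrArg Sum.inl (Fin.ext (by omega))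
    · exfalso; fin_cases b <;> simp_all <;> omega
    · exfalso; fin_cases a <;> simp_all <;> omega
    · fin_cases a <;> fin_cases b <;> simp_all [Fin.ext_iff] <;> omega
  have hbij : Function.Bijective (Sum.elim ip bd) := by
    rw [Fintype.bijective_iff_injective_and_card]
    exact ⟨hinj, by simp⟩
  set e : (Fin m ⊕ Fin 2) ≃ Fin (m+2) := Equiv.ofBijective _ hbij with he
  have hMblocks : M.submatrix e e = fromBlocks E B C D := by
    ext i j
    cases i <;> cases j <;> rfl
  have hdetM : M.det = E.det * (S 0 0 * S 1 1 - S 0 1 * S 1 0) := by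
    rw [← det_submatrix_equiv_self e M, hMblocks, det_fromBlocks₁₁, ← hSdef, det_fin_two]
  -- the corner equivalences
  set φ0 : (Fin m ⊕ Fin 1) → Fin (m+1) :=
    Sum.elim (fun p => ⟨p.1+1, by omega⟩) (fun _ => ⟨0, by omega⟩) with hφ0
  set φ1 : (Fin m ⊕ Fin 1) → Fin (m+1) :=
    Sum.elim (fun p => ⟨p.1, by omega⟩) (fun _ => ⟨m, by omega⟩) with hφ1
  have hφ0inj : Function.Injective φ0 := by
    rintro (p | x) (q | y) h <;>
      simp only [hφ0, Sum.elim_inl, Sum.elim_inr, Fin.ext_iff] at h ⊢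
    · exact congrArg Sum.inl (Fin.ext (by omega))
    · exfalso; omega
    · exfalso; omega
    · exact congrArg Sum.inr (Subsingleton.elim _ _)
  have hφ1inj : Function.Injective φ1 := by
    rintro (p | x) (q | y) h <;>
      simp only [hφ1, Sum.elim_inl, Sum.elim_inr, Fin.ext_iff] at h ⊢
    · exact congrArg Sum.inl (Fin.ext (by omega))
    · exfalso; have := p.2; omega
    · exfalso; have := q.2; omega
    · exact congrArg Sum.inr (Subsingleton.elim _ _)
  set φ : Fin 2 → ((Fin m ⊕ Fin 1) → Fin (m+1)) := ![φ0, φ1] with hφ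
  have hφbij : ∀ a, Function.Bijective (φ a) := by
    intro a
    rw [Fintype.bijective_iff_injective_and_card]
    refine ⟨?_, by simp⟩
    fin_cases a
    · exact hφ0inj
    · exact hφ1inj
  set ee : Fin 2 → ((Fin m ⊕ Fin 1) ≃ Fin (m+1)) := fun a => Equiv.ofBijective _ (hφbij a)
    with hee
  set τ : Fin 2 → Equiv.Perm (Fin m ⊕ Fin 1) := fun a => (ee 0).trans (ee a).symm with hτ
  set rr : Fin 2 → (Fin (m+1) → Fin (m+2)) := ![Fin.castSucc, Fin.succ] with hrr
  have hcomp : ∀ a : Fin 2, rr a ∘ (φ a) = Sum.elim ip (fun _ => bd a) := by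
    intro a
    funext x
    fin_cases a <;> rcases x with p | x <;>
      first
      | rfl
      | (apply Fin.ext; simp [hrr, hφ, hφ0, hφ1, hip, hbd])
  set ε : Fin 2 → ℝ := fun a => ((Equiv.Perm.sign (τ a) : ℤ) : ℝ) with hε
  have hcorner : ∀ a b : Fin 2,
      (M.submatrix (rr a) (rr b)).det = ε a * ε b * (E.det * S a b) := by
    intro a b
    have h1 : (M.submatrix (rr a) (rr b)).det
        = ((M.submatrix (rr a) (rr b)).submatrix (ee 0) (ee 0)).det :=
      (det_submatrix_equiv_self (ee 0) _).symm
    have h2 : (M.submatrix (rr a) (rr b)).submatrix (ee 0) (ee 0)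
        = (M.submatrix (rr a ∘ φ a) (rr b ∘ φ b)).submatrix (τ a) (τ b) := by
      ext x y
      simp only [submatrix_apply, Function.comp_apply]
      congr 1
      · show rr a (ee 0 x) = rr a (φ a (τ a x))
        congr 1
        show ee 0 x = ee a ((ee a).symm (ee 0 x))
        rw [Equiv.apply_symm_apply]
      · show rr b (ee 0 y) = rr b (φ b (τ b y))
        congr 1
        show ee 0 y = ee b ((ee b).symm (ee 0 y))
        rw [Equiv.apply_symm_apply]
    have h3 : ((M.submatrix (rr a ∘ φ a) (rr b ∘ φ b)).submatrix (τ a) (τ b)).det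
        = ε a * ε b * (M.submatrix (rr a ∘ φ a) (rr b ∘ φ b)).det := by
      have hsplit : (M.submatrix (rr a ∘ φ a) (rr b ∘ φ b)).submatrix (τ a) (τ b)
          = ((M.submatrix (rr a ∘ φ a) (rr b ∘ φ b)).submatrix (⇑(τ a)) id).submatrix
              id (⇑(τ b)) := by
        ext x y; simp
      rw [hsplit, det_permute', det_permute, hε]
      push_cast
      ring
    have h4 : (M.submatrix (rr a ∘ φ a) (rr b ∘ φ b)).det = E.det * S a b := by
      rw [hcomp a, hcomp b]
      have hblk : M.submatrix (Sum.elim ip fun _ => bd a) (Sum.elim ip fun _ => bd b)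
          = fromBlocks E (M.submatrix ip (fun _ : Fin 1 => bd b))
              (M.submatrix (fun _ : Fin 1 => bd a) ip)
              (M.submatrix (fun _ : Fin 1 => bd a) (fun _ : Fin 1 => bd b)) := by
        ext x y; cases x <;> cases y <;> rfl
      rw [hblk, det_fromBlocks₁₁]
      congr 1
      rw [det_fin_one]
      simp only [hSdef, Matrix.sub_apply, mul_apply, submatrix_apply, hDdef, hCdef, hBdef]
    rw [h1, h2, h3, h4]
  have hε0 : ε 0 = 1 := by
    simp [hε, hτ]
  have hε1 : ε 1 * ε 1 = 1 := by
    simp only [hε]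
    rw [← Int.cast_mul, ← Units.val_mul, Int.units_mul_self]
    norm_num
  have hc00 := hcorner 0 0
  have hc11 := hcorner 1 1
  have hc01 := hcorner 0 1
  have hc10 := hcorner 1 0
  have hrr0 : Fin.castSucc = rr 0 := by simp [hrr]
  have hrr1 : Fin.succ = rr 1 := by simp [hrr]
  rw [hrr0, hrr1, hc00, hc11, hc01, hc10, hdetM, hε0]
  linear_combination (-(E.det^2 * (S 0 0 * S 1 1 - S 0 1 * S 1 0))) * hε1

lemma dj_cminor {n : ℕ} (A : Matrix (Fin n) (Fin n) ℝ) (m i j : ℕ)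
    (h1 : i + (m+2) ≤ n) (h2 : j + (m+2) ≤ n)
    (hE : cminor A m (i+1) (j+1) (by omega) (by omega) ≠ 0) :
    cminor A (m+2) i j h1 h2 * cminor A m (i+1) (j+1) (by omega) (by omega)
      = cminor A (m+1) i j (by omega) (by omega)
          * cminor A (m+1) (i+1) (j+1) (by omega) (by omega)
        - cminor A (m+1) i (j+1) (by omega) (by omega)
          * cminor A (m+1) (i+1) j (by omega) (by omega) := by
  set M : Matrix (Fin (m+2)) (Fin (m+2)) ℝ :=
    A.submatrix (fun p : Fin (m+2) => (⟨i + p.1, by have := p.2; omega⟩ : Fin n))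
                (fun p : Fin (m+2) => (⟨j + p.1, by have := p.2; omega⟩ : Fin n)) with hM
  have key : ∀ (a b s : ℕ) (r c : Fin s → Fin (m+2)),
      (∀ p, (r p).1 = a + p.1) → (∀ p, (c p).1 = b + p.1) →
      ∀ (hia : (i+a) + s ≤ n) (hjb : (j+b) + s ≤ n),
      (M.submatrix r c).det = cminor A s (i+a) (j+b) hia hjb := by
    intro a b s r c hr hc hia hjb
    unfold cminor
    rw [hM, submatrix_submatrix]
    congr 1
    ext p q
    simp only [submatrix_apply, Function.comp_apply]
    congr 1
    · apply Fin.ext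
      show i + (r p).1 = i + a + p.1
      rw [hr p]; omega
    · apply Fin.ext
      show j + (c q).1 = j + b + q.1
      rw [hc q]; omega
  have hdet : M.det = cminor A (m+2) i j h1 h2 := by
    have : M.det = (M.submatrix id id).det := by rw [submatrix_id_id]
    rw [this]
    exact key 0 0 (m+2) id id (fun p => by simp only [id_eq]; omega)
      (fun p => by simp only [id_eq]; omega) (by omega) (by omega)
  have hEeq := key 1 1 m (fun p : Fin m => (⟨p.1+1, by omega⟩ : Fin (m+2)))
    (fun p : Fin m => (⟨p.1+1, by omega⟩ : Fin (m+2)))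
    (fun p => by show p.1 + 1 = 1 + p.1; omega) (fun p => by show p.1 + 1 = 1 + p.1; omega)
    (by omega) (by omega)
  have hTL := key 0 0 (m+1) Fin.castSucc Fin.castSucc
    (fun p => by simp only [Fin.coe_castSucc]; omega)
    (fun p => by simp only [Fin.coe_castSucc]; omega) (by omega) (by omega)
  have hBR := key 1 1 (m+1) Fin.succ Fin.succ
    (fun p => by simp only [Fin.val_succ]; omega) (fun p => by simp only [Fin.val_succ]; omega)
    (by omega) (by omega)
  have hTR := key 0 1 (m+1) Fin.castSucc Fin.succ
    (fun p => by simp only [Fin.coe_castSucc]; omega)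
    (fun p => by simp only [Fin.val_succ]; omega) (by omega) (by omega)
  have hBL := key 1 0 (m+1) Fin.succ Fin.castSucc
    (fun p => by simp only [Fin.val_succ]; omega)
    (fun p => by simp only [Fin.coe_castSucc]; omega) (by omega) (by omega)
  have hdj := desnanot_jacobi M (by rw [hEeq]; simpa using hE)
  rw [hEeq, hTL, hBR, hTR, hBL, hdet] at hdj
  simpa using hdj

/-- The entries of the `k`-th Dodgson condensation matrix are the contiguous
minors of order `k+1`, provided all intermediate contiguous minors used as
divisors are nonzero. -/
theorem condm_eq_contiguous_minor {n k : ℕ} (A : Matrix (Fin n) (Fin n) ℝ)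
    (hdiv : ∀ (l i j : ℕ), 1 ≤ l → l + 1 ≤ k → ∀ (hi : i + l ≤ n) (hj : j + l ≤ n),
      cminor A l i j hi hj ≠ 0)
    (i j : ℕ) (hi : i + k + 1 ≤ n) (hj : j + k + 1 ≤ n) :
    condm A k i j = cminor A (k + 1) i j (by omega) (by omega) := by
  induction k using Nat.strong_induction_on generalizing i j with
  | _ k IH =>
    match k, hdiv, hi, hj, IH with
    | 0, hdiv, hi, hj, IH =>
      show ent A i j = _
      unfold cminor ent
      rw [det_fin_one]
      have h1 : i < n := by omega
      have h2 : j < n := by omega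
      rw [dif_pos ⟨h1, h2⟩]
      simp only [submatrix_apply]
      congr 1 <;> exact Fin.ext (by simp)
    | 1, hdiv, hi, hj, IH =>
      show ent A i j * ent A (i+1) (j+1) - ent A i (j+1) * ent A (i+1) j = _
      unfold cminor
      rw [det_fin_two]
      simp only [submatrix_apply]
      unfold ent
      rw [dif_pos ⟨by omega, by omega⟩, dif_pos ⟨by omega, by omega⟩,
        dif_pos ⟨by omega, by omega⟩, dif_pos ⟨by omega, by omega⟩]
      congr 1 <;> congr 1 <;> congr 1 <;> exact Fin.ext (by simp)
    | (k+2), hdiv, hi, hj, IH =>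
      have hdiv' : ∀ (l i j : ℕ), 1 ≤ l → l + 1 ≤ k + 1 → ∀ (hi : i + l ≤ n) (hj : j + l ≤ n),
          cminor A l i j hi hj ≠ 0 := fun l i j h1 h2 hi hj =>
        hdiv l i j h1 (by omega) hi hj
      have hdiv'' : ∀ (l i j : ℕ), 1 ≤ l → l + 1 ≤ k → ∀ (hi : i + l ≤ n) (hj : j + l ≤ n),
          cminor A l i j hi hj ≠ 0 := fun l i j h1 h2 hi hj =>
        hdiv l i j h1 (by omega) hi hj
      have e1 := IH (k+1) (by omega) hdiv' i j (by omega) (by omega)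
      have e2 := IH (k+1) (by omega) hdiv' (i+1) (j+1) (by omega) (by omega)
      have e3 := IH (k+1) (by omega) hdiv' i (j+1) (by omega) (by omega)
      have e4 := IH (k+1) (by omega) hdiv' (i+1) j (by omega) (by omega)
      have e5 := IH k (by omega) hdiv'' (i+1) (j+1) (by omega) (by omega)
      have hEne : cminor A (k+1) (i+1) (j+1) (by omega) (by omega) ≠ 0 :=
        hdiv (k+1) (i+1) (j+1) (by omega) (by omega) (by omega) (by omega)
      have hdj := dj_cminor A (k+1) i j (by omega) (by omega) hEne
      show (condm A (k + 1) i j * condm A (k + 1) (i + 1) (j + 1)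
        - condm A (k + 1) i (j + 1) * condm A (k + 1) (i + 1) j) / condm A k (i + 1) (j + 1) = _
      rw [e1, e2, e3, e4, e5]
      rw [div_eq_iff hEne]
      rw [← hdj]
end

section
/- Theorem A (case n=4, k=2): If A is a 4-by-4 totally positive matrix, then the second compound C_2(A) is not TP_3; in fact, among the 3-by-3 minors of the leading principal 4-by-4 submatrix of C_2(A), at least one is negative. Specifically, with S the 4-by-4 matrix with entries s_{pq} = det A[S_p, S_q] for S_1={1,2}, S_2={1,3}, S_3={1,4}, S_4={2,3}, the minors det S[{1,2,3},{1,3,4}] and det S[{1,2,4},{1,3,4}] have opposite signs. -/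
open Matrix

open Matrix

/-- The 2-subsets `{1,2}, {1,3}, {1,4}, {2,3}` of `{1,2,3,4}` (0-indexed). -/
def pairSets : Fin 4 → (Fin 2 → Fin 4) := ![![0, 1], ![0, 2], ![0, 3], ![1, 2]]

/-- The leading principal `4×4` submatrix `S` of `C₂(A)`, with entries
`s_{pq} = det A[S_p, S_q]`. -/
noncomputable def Smat (A : Matrix (Fin 4) (Fin 4) ℝ) : Matrix (Fin 4) (Fin 4) ℝ :=
  fun p q => (A.submatrix (pairSets p) (pairSets q)).det



namespace TPaux

theorem det_fin_four' (M : Matrix (Fin 4) (Fin 4) ℝ) :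
    M.det =
      M 0 0 * (M 1 1 * (M 2 2 * M 3 3 - M 2 3 * M 3 2) - M 1 2 * (M 2 1 * M 3 3 - M 2 3 * M 3 1)
        + M 1 3 * (M 2 1 * M 3 2 - M 2 2 * M 3 1))
      - M 0 1 * (M 1 0 * (M 2 2 * M 3 3 - M 2 3 * M 3 2) - M 1 2 * (M 2 0 * M 3 3 - M 2 3 * M 3 0)
        + M 1 3 * (M 2 0 * M 3 2 - M 2 2 * M 3 0))
      + M 0 2 * (M 1 0 * (M 2 1 * M 3 3 - M 2 3 * M 3 1) - M 1 1 * (M 2 0 * M 3 3 - M 2 3 * M 3 0)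
        + M 1 3 * (M 2 0 * M 3 1 - M 2 1 * M 3 0))
      - M 0 3 * (M 1 0 * (M 2 1 * M 3 2 - M 2 2 * M 3 1) - M 1 1 * (M 2 0 * M 3 2 - M 2 2 * M 3 0)
        + M 1 2 * (M 2 0 * M 3 1 - M 2 1 * M 3 0)) := by
  rw [Matrix.det_succ_row_zero]
  simp only [Fin.sum_univ_succ, Fin.sum_univ_zero, Matrix.det_fin_three, Matrix.submatrix_apply]
  simp [Fin.succAbove, Fin.lt_def, Fin.succ, Fin.castSucc, Fin.castAdd, Fin.castLE, pow_succ]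
  ring

def t01 : STuple 4 2 := ⟨![0, 1], by decide⟩
def t02 : STuple 4 2 := ⟨![0, 2], by decide⟩
def t03 : STuple 4 2 := ⟨![0, 3], by decide⟩
def t12 : STuple 4 2 := ⟨![1, 2], by decide⟩

lemma M1_eq (A : Matrix (Fin 4) (Fin 4) ℝ) :
    ((Smat A).submatrix (![0, 1, 2] : Fin 3 → Fin 4) (![0, 2, 3] : Fin 3 → Fin 4)).det
      = -((A.submatrix (![0] : Fin 1 → Fin 4) (![0] : Fin 1 → Fin 4)).det *
          (A.submatrix (![0] : Fin 1 → Fin 4) (![1] : Fin 1 → Fin 4)).det *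
          (A.submatrix (id : Fin 4 → Fin 4) (id : Fin 4 → Fin 4)).det) := by
  rw [Matrix.submatrix_id_id, det_fin_four', Matrix.det_fin_three, Matrix.det_fin_one,
    Matrix.det_fin_one]
  simp only [Smat, Matrix.submatrix_apply, Matrix.det_fin_two]
  simp [Smat, pairSets, Matrix.det_fin_three, Matrix.det_fin_two, Matrix.det_fin_one]
  ring

lemma M2_eq (A : Matrix (Fin 4) (Fin 4) ℝ) :
    ((Smat A).submatrix (![0, 1, 3] : Fin 3 → Fin 4) (![0, 2, 3] : Fin 3 → Fin 4)).det
      = (A.submatrix (![0, 1, 2] : Fin 3 → Fin 4) (![0, 1, 2] : Fin 3 → Fin 4)).det *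
        (A.submatrix (![0, 1, 2] : Fin 3 → Fin 4) (![0, 1, 3] : Fin 3 → Fin 4)).det := by
  rw [Matrix.det_fin_three, Matrix.det_fin_three, Matrix.det_fin_three]
  simp only [Smat, Matrix.submatrix_apply, Matrix.det_fin_two]
  simp [Smat, pairSets, Matrix.det_fin_three, Matrix.det_fin_two]
  ring

end TPaux

open TPaux in
/-- **Theorem A (case n = 4, k = 2).** If `A` is a `4×4` totally positive matrix
then `C₂(A)` is not `TP₃`; in fact the minors `det S[{1,2,3},{1,3,4}]` and
`det S[{1,2,4},{1,3,4}]` have opposite signs. -/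
theorem second_compound_not_TP3 (A : Matrix (Fin 4) (Fin 4) ℝ) (hA : IsTP A) :
    ¬ IsTPk (compound A 2) 3 ∧
    ((Smat A).submatrix (![0, 1, 2] : Fin 3 → Fin 4) (![0, 2, 3] : Fin 3 → Fin 4)).det *
      ((Smat A).submatrix (![0, 1, 3] : Fin 3 → Fin 4) (![0, 2, 3] : Fin 3 → Fin 4)).det
      < 0 := by
  have hpos1 : 0 < (A.submatrix (![0] : Fin 1 → Fin 4) (![0] : Fin 1 → Fin 4)).det :=
    hA 1 ![0] ![0] (by decide) (by decide)
  have hpos2 : 0 < (A.submatrix (![0] : Fin 1 → Fin 4) (![1] : Fin 1 → Fin 4)).det :=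
    hA 1 ![0] ![1] (by decide) (by decide)
  have hpos3 : 0 < (A.submatrix (id : Fin 4 → Fin 4) (id : Fin 4 → Fin 4)).det :=
    hA 4 id id strictMono_id strictMono_id
  have hpos4 : 0 < (A.submatrix (![0, 1, 2] : Fin 3 → Fin 4) (![0, 1, 2] : Fin 3 → Fin 4)).det :=
    hA 3 ![0, 1, 2] ![0, 1, 2] (by decide) (by decide)
  have hpos5 : 0 < (A.submatrix (![0, 1, 2] : Fin 3 → Fin 4) (![0, 1, 3] : Fin 3 → Fin 4)).det :=
    hA 3 ![0, 1, 2] ![0, 1, 3] (by decide) (by decide)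
  have hM1 : ((Smat A).submatrix (![0, 1, 2] : Fin 3 → Fin 4)
      (![0, 2, 3] : Fin 3 → Fin 4)).det < 0 := by
    rw [M1_eq]
    exact neg_lt_zero.mpr (mul_pos (mul_pos hpos1 hpos2) hpos3)
  have hM2 : 0 < ((Smat A).submatrix (![0, 1, 3] : Fin 3 → Fin 4)
      (![0, 2, 3] : Fin 3 → Fin 4)).det := by
    rw [M2_eq]; exact mul_pos hpos4 hpos5
  refine ⟨?_, mul_neg_of_neg_of_pos hM1 hM2⟩
  intro h
  have h1 := h 3 le_rfl ![t01, t02, t03] ![t01, t03, t12]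
    (by
      intro a b hab
      fin_cases a <;> fin_cases b <;>
        first
          | exact absurd hab (by decide)
          | exact ⟨1, by intro j hj; fin_cases j <;> (first | rfl | exact absurd hj (by decide)), by decide⟩)
    (by
      intro a b hab
      fin_cases a <;> fin_cases b
      all_goals try exact absurd hab (by decide)
      · exact ⟨1, by intro j hj; fin_cases j <;> (first | rfl | exact absurd hj (by decide)), by decide⟩
      · exact ⟨0, fun j hj => absurd hj (by simp), by decide⟩
      · exact ⟨0, fun j hj => absurd hj (by simp), by decide⟩)
  have heq : (compound A 2).submatrix ![t01, t02, t03] ![t01, t03, t12]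
      = (Smat A).submatrix (![0, 1, 2] : Fin 3 → Fin 4) (![0, 2, 3] : Fin 3 → Fin 4) := by
    ext i j
    fin_cases i <;> fin_cases j <;> rfl
  rw [heq] at h1
  exact absurd h1 (not_lt.mpr hM1.le)
end

section
/- Theorem A: Let n ≥ 4 and 2 ≤ k ≤ n-2. If an n-by-n real matrix A is TP_{k+2}, then the kth compound C_k(A) is not TP_3. -/
open Matrix

open Matrix

namespace ThmAux

variable {n m : ℕ}

/-- inclusion of the prefix `{0,…,m-1}`. -/
def lo (hmn : m + 4 ≤ n) : Fin m → Fin n := fun i => ⟨i.1, by omega⟩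

/-- inclusion of the free block `{m,…,m+3}`. -/
def hib (hmn : m + 4 ≤ n) : Fin 4 → Fin n := fun i => ⟨m + i.1, by have := i.2; omega⟩

lemma lo_mono (hmn : m + 4 ≤ n) : StrictMono (lo hmn) :=
  fun _ _ h => h

/-- the `k = m+2` subset `prefix ∪ {m + α 0, m + α 1}`. -/
def emb (hmn : m + 4 ≤ n) (α : Fin 2 → Fin 4) : Fin (m + 2) → Fin n :=
  fun i =>
    if h : i.1 < m then ⟨i.1, by omega⟩
    else ⟨m + (α ⟨i.1 - m, by have := i.2; omega⟩).1,
      by have h4 := (α (⟨i.1 - m, by have := i.2; omega⟩ : Fin 2)).2; omega⟩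

lemma emb_mono (hmn : m + 4 ≤ n) {α : Fin 2 → Fin 4} (hα : StrictMono α) :
    StrictMono (emb hmn α) := by
  intro i j hij
  have hij' : i.1 < j.1 := hij
  simp only [emb]
  split_ifs with h1 h2 h2
  · exact hij'
  · simp only [Fin.lt_def]
    omega
  · omega
  · have harg : (⟨i.1 - m, by have := i.2; omega⟩ : Fin 2) < ⟨j.1 - m, by have := j.2; omega⟩ := by
      simp only [Fin.lt_def]
      omega
    have := hα harg
    simp only [Fin.lt_def] at this ⊢
    omega

lemma emb_eq (hmn : m + 4 ≤ n) (α : Fin 2 → Fin 4) (x : Fin m ⊕ Fin 2) :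
    emb hmn α (finSumFinEquiv x) = Sum.elim (lo hmn) (fun u => hib hmn (α u)) x := by
  cases x with
  | inl x =>
      have : (finSumFinEquiv (Sum.inl x) : Fin (m + 2)).1 = x.1 := rfl
      simp only [emb, Sum.elim_inl, lo]
      rw [dif_pos (by rw [this]; exact x.2)]
      exact Fin.ext this
  | inr x =>
      have : (finSumFinEquiv (Sum.inr x) : Fin (m + 2)).1 = m + x.1 := rfl
      simp only [emb, Sum.elim_inr, hib]
      rw [dif_neg (by omega)]
      apply Fin.ext
      simp only [this]
      congr 2
      exact Fin.ext (by simp [this])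

def Pm (hmn : m + 4 ≤ n) (A : Matrix (Fin n) (Fin n) ℝ) : Matrix (Fin m) (Fin m) ℝ :=
  A.submatrix (lo hmn) (lo hmn)

def Qm (hmn : m + 4 ≤ n) (A : Matrix (Fin n) (Fin n) ℝ) : Matrix (Fin m) (Fin 4) ℝ :=
  A.submatrix (lo hmn) (hib hmn)

def Rm (hmn : m + 4 ≤ n) (A : Matrix (Fin n) (Fin n) ℝ) : Matrix (Fin 4) (Fin m) ℝ :=
  A.submatrix (hib hmn) (lo hmn)

def Wm (hmn : m + 4 ≤ n) (A : Matrix (Fin n) (Fin n) ℝ) : Matrix (Fin 4) (Fin 4) ℝ :=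
  A.submatrix (hib hmn) (hib hmn)

/-- the Schur complement. -/
noncomputable def Gm (hmn : m + 4 ≤ n) (A : Matrix (Fin n) (Fin n) ℝ) :
    Matrix (Fin 4) (Fin 4) ℝ :=
  Wm hmn A - Rm hmn A * (Pm hmn A)⁻¹ * Qm hmn A

lemma emb_det (hmn : m + 4 ≤ n) (A : Matrix (Fin n) (Fin n) ℝ)
    [Invertible (Pm hmn A)] (α β : Fin 2 → Fin 4) :
    (A.submatrix (emb hmn α) (emb hmn β)).det
      = (Pm hmn A).det * (((Gm hmn A)).submatrix α β).det := by
  have hsub : A.submatrix (emb hmn α) (emb hmn β)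
      = (fromBlocks (Pm hmn A) ((Qm hmn A).submatrix id β)
          ((Rm hmn A).submatrix α id) ((Wm hmn A).submatrix α β)).submatrix
          (finSumFinEquiv (m := m) (n := 2)).symm finSumFinEquiv.symm := by
    funext i j
    simp only [Matrix.submatrix_apply]
    rw [show i = finSumFinEquiv (finSumFinEquiv.symm i) from (Equiv.apply_symm_apply _ _).symm,
        show j = finSumFinEquiv (finSumFinEquiv.symm j) from (Equiv.apply_symm_apply _ _).symm]
    rw [emb_eq, emb_eq]
    simp only [Equiv.symm_apply_apply]
    rcases finSumFinEquiv.symm i with x | x <;> rcases finSumFinEquiv.symm j with y | y <;>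
      rfl
  rw [hsub, Matrix.det_submatrix_equiv_self, Matrix.det_fromBlocks₁₁,
      Matrix.invOf_eq_nonsing_inv]
  congr 1

def prt : Fin 3 → (Fin 2 → Fin 4) := ![![0, 1], ![0, 2], ![0, 3]]
def pct : Fin 3 → (Fin 2 → Fin 4) := ![![0, 1], ![0, 2], ![1, 2]]

lemma prt_mono : ∀ i, StrictMono (prt i) := by decide
lemma pct_mono : ∀ i, StrictMono (pct i) := by decide

end ThmAux

open ThmAux

/-- The preorder underlying the (pinned) lexicographic linear order on `STuple`. -/
noncomputable abbrev SOrd (N K : ℕ) : Preorder (STuple N K) :=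
  (instLinearOrderSTuple (n := N) (k := K)).toPartialOrder.toPreorder

namespace ThmAux

variable {n m : ℕ}

lemma stuple_lt {N K : ℕ} (x y : STuple N K) (i : Fin K)
    (h1 : ∀ j, j < i → x.1 j = y.1 j) (h2 : x.1 i < y.1 i) :
    @LT.lt _ (SOrd N K).toLT x y :=
  ⟨i, h1, h2⟩

lemma emb_lt (hmn : m + 4 ≤ n) {α β : Fin 2 → Fin 4}
    (hα : StrictMono α) (hβ : StrictMono β) (w : Fin 2)
    (hpre : ∀ u : Fin 2, u < w → α u = β u) (hw : α w < β w) :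
    @LT.lt _ (SOrd n (m + 2)).toLT
      (⟨emb hmn α, emb_mono hmn hα⟩ : STuple n (m + 2)) ⟨emb hmn β, emb_mono hmn hβ⟩ := by
  refine stuple_lt _ _ (finSumFinEquiv (Sum.inr w)) ?_ ?_
  · intro j hj
    rw [show j = finSumFinEquiv (finSumFinEquiv.symm j) from (Equiv.apply_symm_apply _ _).symm]
      at hj ⊢
    generalize finSumFinEquiv.symm j = x at hj ⊢
    rcases x with u | u
    · show emb hmn α _ = emb hmn β _
      rw [emb_eq, emb_eq]
      simp only [Sum.elim_inl]
    · show emb hmn α _ = emb hmn β _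
      rw [emb_eq, emb_eq]
      simp only [Sum.elim_inr]
      have huw : u.1 < w.1 := by
        rw [finSumFinEquiv_apply_right, finSumFinEquiv_apply_right] at hj
        have h2 := Fin.lt_def.mp hj
        simp only [Fin.coe_natAdd] at h2
        omega
      rw [hpre u huw]
  · show emb hmn α _ < emb hmn β _
    rw [emb_eq, emb_eq]
    simp only [Sum.elim_inr, hib]
    have hw' : (α w).1 < (β w).1 := hw
    simp only [Fin.lt_def]
    omega

def rowS (hmn : m + 4 ≤ n) : Fin 3 → STuple n (m + 2) :=
  fun i => ⟨emb hmn (prt i), emb_mono hmn (prt_mono i)⟩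

def colS (hmn : m + 4 ≤ n) : Fin 3 → STuple n (m + 2) :=
  fun i => ⟨emb hmn (pct i), emb_mono hmn (pct_mono i)⟩

lemma rowS_mono (hmn : m + 4 ≤ n) :
    @StrictMono _ _ _ (SOrd n (m + 2)) (rowS hmn) := by
  have h01 : @LT.lt _ (SOrd n (m + 2)).toLT (rowS hmn 0) (rowS hmn 1) :=
    emb_lt hmn (prt_mono 0) (prt_mono 1) 1 (by decide) (by decide)
  have h02 : @LT.lt _ (SOrd n (m + 2)).toLT (rowS hmn 0) (rowS hmn 2) :=
    emb_lt hmn (prt_mono 0) (prt_mono 2) 1 (by decide) (by decide)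
  have h12 : @LT.lt _ (SOrd n (m + 2)).toLT (rowS hmn 1) (rowS hmn 2) :=
    emb_lt hmn (prt_mono 1) (prt_mono 2) 1 (by decide) (by decide)
  intro a b hab
  fin_cases a <;> fin_cases b <;>
    first
      | exact absurd hab (by decide)
      | exact h01
      | exact h02
      | exact h12

lemma colS_mono (hmn : m + 4 ≤ n) :
    @StrictMono _ _ _ (SOrd n (m + 2)) (colS hmn) := by
  have h01 : @LT.lt _ (SOrd n (m + 2)).toLT (colS hmn 0) (colS hmn 1) :=
    emb_lt hmn (pct_mono 0) (pct_mono 1) 1 (by decide) (by decide)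
  have h02 : @LT.lt _ (SOrd n (m + 2)).toLT (colS hmn 0) (colS hmn 2) :=
    emb_lt hmn (pct_mono 0) (pct_mono 2) 0 (by decide) (by decide)
  have h12 : @LT.lt _ (SOrd n (m + 2)).toLT (colS hmn 1) (colS hmn 2) :=
    emb_lt hmn (pct_mono 1) (pct_mono 2) 0 (by decide) (by decide)
  intro a b hab
  fin_cases a <;> fin_cases b <;>
    first
      | exact absurd hab (by decide)
      | exact h01
      | exact h02
      | exact h12

end ThmAux

/-- **Theorem A.** Let `n ≥ 4` and `2 ≤ k ≤ n-2`. If `A` is `TP_{k+2}`, then the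
`k`-th compound `C_k(A)` is not `TP₃`. -/
theorem compound_not_TP3 {n k : ℕ} (hn : 4 ≤ n) (hk2 : 2 ≤ k) (hkn : k ≤ n - 2)
    (A : Matrix (Fin n) (Fin n) ℝ) (hA : IsTPk A (k + 2)) :
    ¬ IsTPk (compound A k) 3 := by
  intro hC
  obtain ⟨m, rfl⟩ : ∃ m, k = m + 2 := ⟨k - 2, by omega⟩
  have hmn : m + 4 ≤ n := by omega
  have hd : 0 < (Pm hmn A).det :=
    hA m (by omega) (lo hmn) (lo hmn) (lo_mono hmn) (lo_mono hmn)
  letI : Invertible (Pm hmn A) :=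
    (Pm hmn A).invertibleOfIsUnitDet (isUnit_iff_ne_zero.mpr (ne_of_gt hd))
  have h3 := hC 3 le_rfl (rowS hmn) (colS hmn) (rowS_mono hmn) (colS_mono hmn)
  have heq : (compound A (m + 2)).submatrix (rowS hmn) (colS hmn)
      = (Pm hmn A).det •
        Matrix.of (fun i j : Fin 3 => (((Gm hmn A)).submatrix (prt i) (pct j)).det) := by
    ext i j
    simp only [Matrix.submatrix_apply, Matrix.smul_apply, Matrix.of_apply, smul_eq_mul]
    exact emb_det hmn A (prt i) (pct j)
  have hzero :
      (Matrix.of (fun i j : Fin 3 => (((Gm hmn A)).submatrix (prt i) (pct j)).det)).det = 0 := by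
    simp only [prt, pct, Matrix.det_fin_three, Matrix.det_fin_two, Matrix.of_apply,
      Matrix.submatrix_apply, Matrix.cons_val_zero, Matrix.cons_val_one, Matrix.head_cons,
      Matrix.cons_val_two, Matrix.tail_cons]
    ring
  rw [heq, Matrix.det_smul, hzero, mul_zero] at h3
  exact lt_irrefl 0 h3
end

section
/- Corollary: Let n ≥ 4 and 2 ≤ k ≤ n-2. If the kth compound C_k(A) of an n-by-n real matrix A is TP_3, then A is not TP_{k+2}. -/
open Matrix

open Matrix

section AuxTP

/-- Selection of the first `s` indices. -/
def eFsel (s n : ℕ) (h : s + 4 ≤ n) : Fin s → Fin n := fun i => ⟨i.1, by have := i.2; omega⟩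

/-- Selection of the window `{s, s+1, s+2, s+3}`. -/
def wFsel (s n : ℕ) (h : s + 4 ≤ n) : Fin 4 → Fin n := fun i => ⟨s + i.1, by have := i.2; omega⟩

/-- Selection indexing the set `{0,…,s-1} ∪ (s + r '' Fin l)`. -/
def rowSel (s n l : ℕ) (h : s + 4 ≤ n) (r : Fin l → Fin 4) : Fin (s + l) → Fin n :=
  fun t =>
    if ht : t.1 < s then ⟨t.1, by omega⟩
    else ⟨s + (r ⟨t.1 - s, by have := t.2; omega⟩).1,
      by have := (r ⟨t.1 - s, by have := t.2; omega⟩).2; omega⟩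

lemma eFsel_strictMono {s n : ℕ} (h : s + 4 ≤ n) : StrictMono (eFsel s n h) := by
  intro i j hij
  rw [Fin.lt_def] at hij ⊢
  exact hij

lemma rowSel_val_lt {s n l : ℕ} (h : s + 4 ≤ n) (r : Fin l → Fin 4) (t : Fin (s + l))
    (ht : t.1 < s) : (rowSel s n l h r t).1 = t.1 := by
  simp [rowSel, dif_pos ht]

lemma rowSel_val_ge {s n l : ℕ} (h : s + 4 ≤ n) (r : Fin l → Fin 4) (t : Fin (s + l))
    (ht : ¬ t.1 < s) :
    (rowSel s n l h r t).1 = s + (r ⟨t.1 - s, by have := t.2; omega⟩).1 := by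
  simp [rowSel, dif_neg ht]

lemma rowSel_strictMono {s n l : ℕ} (h : s + 4 ≤ n) {r : Fin l → Fin 4}
    (hr : StrictMono r) : StrictMono (rowSel s n l h r) := by
  intro a b hab
  rw [Fin.lt_def] at hab ⊢
  by_cases ha : a.1 < s <;> by_cases hb : b.1 < s
  · rw [rowSel_val_lt h r a ha, rowSel_val_lt h r b hb]; exact hab
  · rw [rowSel_val_lt h r a ha, rowSel_val_ge h r b hb]; omega
  · omega
  · rw [rowSel_val_ge h r a ha, rowSel_val_ge h r b hb]
    have hlt : (⟨a.1 - s, by have := a.2; omega⟩ : Fin l) < ⟨b.1 - s, by have := b.2; omega⟩ := by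
      rw [Fin.lt_def]; simp; omega
    have := hr hlt
    rw [Fin.lt_def] at this
    omega

lemma rowSel_castAdd {s n l : ℕ} (h : s + 4 ≤ n) (r : Fin l → Fin 4) (p : Fin s) :
    rowSel s n l h r (Fin.castAdd l p) = eFsel s n h p := by
  apply Fin.ext
  rw [rowSel_val_lt h r _ (by simp)]
  simp [eFsel]

lemma rowSel_natAdd {s n l : ℕ} (h : s + 4 ≤ n) (r : Fin l → Fin 4) (p : Fin l) :
    rowSel s n l h r (Fin.natAdd s p) = wFsel s n h (r p) := by
  apply Fin.ext
  rw [rowSel_val_ge h r _ (by simp)]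
  have e : ∀ (pf : (Fin.natAdd s p).1 - s < l), (⟨(Fin.natAdd s p).1 - s, pf⟩ : Fin l) = p := by
    intro pf; apply Fin.ext; simp
  rw [e]
  simp [wFsel]

/-- The Schur complement of the leading `s × s` block inside the
`(s+4) × (s+4)` leading window. -/
noncomputable def schurMat (s n : ℕ) (h : s + 4 ≤ n) (A : Matrix (Fin n) (Fin n) ℝ) :
    Matrix (Fin 4) (Fin 4) ℝ :=
  A.submatrix (wFsel s n h) (wFsel s n h) -
    A.submatrix (wFsel s n h) (eFsel s n h) * (A.submatrix (eFsel s n h) (eFsel s n h))⁻¹ *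
      A.submatrix (eFsel s n h) (wFsel s n h)

lemma det_rowSel {s n l : ℕ} (h : s + 4 ≤ n) (A : Matrix (Fin n) (Fin n) ℝ)
    [Invertible (A.submatrix (eFsel s n h) (eFsel s n h))] (r c : Fin l → Fin 4) :
    (A.submatrix (rowSel s n l h r) (rowSel s n l h c)).det =
      (A.submatrix (eFsel s n h) (eFsel s n h)).det *
        ((schurMat s n h A).submatrix r c).det := by
  have hsub : A.submatrix (rowSel s n l h r) (rowSel s n l h c) =
      (fromBlocks (A.submatrix (eFsel s n h) (eFsel s n h))
        (A.submatrix (eFsel s n h) (wFsel s n h ∘ c))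
        (A.submatrix (wFsel s n h ∘ r) (eFsel s n h))
        (A.submatrix (wFsel s n h ∘ r) (wFsel s n h ∘ c))).submatrix
        finSumFinEquiv.symm finSumFinEquiv.symm := by
    ext i j
    rcases hi : finSumFinEquiv.symm i with p | p <;> rcases hj : finSumFinEquiv.symm j with q | q <;>
      rw [Equiv.symm_apply_eq] at hi hj <;> subst hi <;> subst hj <;>
      simp [Matrix.submatrix_apply, finSumFinEquiv_apply_left, finSumFinEquiv_apply_right,
        rowSel_castAdd, rowSel_natAdd, Matrix.fromBlocks_apply₁₁, Matrix.fromBlocks_apply₁₂,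
        Matrix.fromBlocks_apply₂₁, Matrix.fromBlocks_apply₂₂]
  have hs2 : A.submatrix (wFsel s n h ∘ r) (wFsel s n h ∘ c) -
      A.submatrix (wFsel s n h ∘ r) (eFsel s n h) *
        ⅟(A.submatrix (eFsel s n h) (eFsel s n h)) *
        A.submatrix (eFsel s n h) (wFsel s n h ∘ c) = (schurMat s n h A).submatrix r c := by
    rw [Matrix.invOf_eq_nonsing_inv]
    ext i j
    simp [schurMat, Matrix.sub_apply, Matrix.mul_apply, Matrix.submatrix_apply, Function.comp]
  rw [hsub, det_submatrix_equiv_self, Matrix.det_fromBlocks₁₁, hs2]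

def Pv : Fin 3 → Fin 2 → Fin 4 := ![![0,1],![0,2],![0,3]]
def Qv : Fin 3 → Fin 2 → Fin 4 := ![![0,1],![0,3],![1,2]]

lemma detfour (M : Matrix (Fin 4) (Fin 4) ℝ) : M.det =
    M 0 0*M 1 1*M 2 2*M 3 3 - M 0 0*M 1 1*M 2 3*M 3 2 - M 0 0*M 1 2*M 2 1*M 3 3
    + M 0 0*M 1 2*M 2 3*M 3 1 + M 0 0*M 1 3*M 2 1*M 3 2 - M 0 0*M 1 3*M 2 2*M 3 1
    - M 0 1*M 1 0*M 2 2*M 3 3 + M 0 1*M 1 0*M 2 3*M 3 2 + M 0 1*M 1 2*M 2 0*M 3 3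
    - M 0 1*M 1 2*M 2 3*M 3 0 - M 0 1*M 1 3*M 2 0*M 3 2 + M 0 1*M 1 3*M 2 2*M 3 0
    + M 0 2*M 1 0*M 2 1*M 3 3 - M 0 2*M 1 0*M 2 3*M 3 1 - M 0 2*M 1 1*M 2 0*M 3 3
    + M 0 2*M 1 1*M 2 3*M 3 0 + M 0 2*M 1 3*M 2 0*M 3 1 - M 0 2*M 1 3*M 2 1*M 3 0
    - M 0 3*M 1 0*M 2 1*M 3 2 + M 0 3*M 1 0*M 2 2*M 3 1 + M 0 3*M 1 1*M 2 0*M 3 2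
    - M 0 3*M 1 1*M 2 2*M 3 0 - M 0 3*M 1 2*M 2 0*M 3 1 + M 0 3*M 1 2*M 2 1*M 3 0 := by
  simp [Matrix.det_succ_row_zero, Fin.sum_univ_succ,
    show Fin.succ (2:Fin 3) = 3 by decide, show Fin.castSucc (2:Fin 3) = 2 by decide,
    show Fin.succAbove (2:Fin 4) 2 = 3 by decide, show Fin.succAbove (1:Fin 4) 2 = 3 by decide,
    show Fin.succAbove (3:Fin 4) 2 = 2 by decide, show Fin.succAbove (0:Fin 4) 2 = 3 by decide]
  ring

/-- The fixed-size core identity: a specific `3×3` minor of the second compound of a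
`4×4` matrix equals `-(G₀₀ · G₀₁ · det G)`. -/
lemma fix4 (G : Matrix (Fin 4) (Fin 4) ℝ) :
    (Matrix.of fun a b : Fin 3 => (G.submatrix (Pv a) (Qv b)).det).det =
      -(G 0 0 * G 0 1 * G.det) := by
  have h2 : ∀ p q : Fin 2 → Fin 4, (G.submatrix p q).det =
      G (p 0) (q 0) * G (p 1) (q 1) - G (p 0) (q 1) * G (p 1) (q 0) := fun p q => by
    rw [Matrix.det_fin_two]; rfl
  rw [detfour, Matrix.det_fin_three]
  simp only [Matrix.of_apply, h2, Pv, Qv, Matrix.cons_val_zero, Matrix.cons_val_one,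
    Matrix.head_cons, Matrix.cons_val_two, Matrix.tail_cons]
  ring

lemma lex_lt_last {s n : ℕ} (h : s + 4 ≤ n) {r c : Fin 2 → Fin 4} (h0 : r 0 = c 0)
    (h1 : r 1 < c 1) :
    toLex (rowSel s n 2 h r) < toLex (rowSel s n 2 h c) := by
  refine ⟨⟨s + 1, by omega⟩, ?_, ?_⟩
  · intro j hj
    simp only [Pi.toLex_apply]
    rw [Fin.lt_def] at hj
    simp only [Fin.val_mk] at hj
    by_cases hs : j.1 < s
    · apply Fin.ext
      rw [rowSel_val_lt h r j hs, rowSel_val_lt h c j hs]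
    · apply Fin.ext
      rw [rowSel_val_ge h r j hs, rowSel_val_ge h c j hs]
      have hjs : j.1 = s := by omega
      have e : ∀ (m : Fin 2 → Fin 4) (pf : j.1 - s < 2), m ⟨j.1 - s, pf⟩ = m 0 := by
        intro m pf; congr 1; apply Fin.ext; simp [hjs]
      rw [e r, e c, h0]
  · show (rowSel s n 2 h r) _ < (rowSel s n 2 h c) _
    rw [Fin.lt_def]
    rw [rowSel_val_ge h r _ (by simp), rowSel_val_ge h c _ (by simp)]
    have e : ∀ (m : Fin 2 → Fin 4) (pf : (⟨s + 1, by omega⟩ : Fin (s + 2)).1 - s < 2),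
        m ⟨(⟨s + 1, by omega⟩ : Fin (s + 2)).1 - s, pf⟩ = m 1 := by
      intro m pf; congr 1; apply Fin.ext; simp
    rw [e r, e c]
    have := h1
    rw [Fin.lt_def] at this
    omega

lemma lex_lt_first {s n : ℕ} (h : s + 4 ≤ n) {r c : Fin 2 → Fin 4} (h0 : r 0 < c 0) :
    toLex (rowSel s n 2 h r) < toLex (rowSel s n 2 h c) := by
  refine ⟨⟨s, by omega⟩, ?_, ?_⟩
  · intro j hj
    simp only [Pi.toLex_apply]
    rw [Fin.lt_def] at hj
    simp only [Fin.val_mk] at hj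
    apply Fin.ext
    rw [rowSel_val_lt h r j hj, rowSel_val_lt h c j hj]
  · show (rowSel s n 2 h r) _ < (rowSel s n 2 h c) _
    rw [Fin.lt_def]
    rw [rowSel_val_ge h r _ (by simp), rowSel_val_ge h c _ (by simp)]
    have e : ∀ (m : Fin 2 → Fin 4) (pf : (⟨s, by omega⟩ : Fin (s + 2)).1 - s < 2),
        m ⟨(⟨s, by omega⟩ : Fin (s + 2)).1 - s, pf⟩ = m 0 := by
      intro m pf; congr 1; apply Fin.ext; simp
    rw [e r, e c]
    have := h0
    rw [Fin.lt_def] at this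
    omega

lemma PvMono : ∀ a, StrictMono (Pv a) := by decide
lemma QvMono : ∀ a, StrictMono (Qv a) := by decide

end AuxTP

/-- **Corollary.** Let `n ≥ 4` and `2 ≤ k ≤ n-2`. If the `k`-th compound
`C_k(A)` is `TP₃`, then `A` is not `TP_{k+2}`. -/
theorem not_TPkplus2_of_compound_TP3 {n k : ℕ} (hn : 4 ≤ n) (hk2 : 2 ≤ k)
    (hkn : k ≤ n - 2) (A : Matrix (Fin n) (Fin n) ℝ)
    (hC : IsTPk (compound A k) 3) : ¬ IsTPk A (k + 2) := by
  intro h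
  obtain ⟨s, rfl⟩ : ∃ s, k = s + 2 := ⟨k - 2, by omega⟩
  have hsn : s + 4 ≤ n := by omega
  have hd : 0 < (A.submatrix (eFsel s n hsn) (eFsel s n hsn)).det :=
    h s (by omega) _ _ (eFsel_strictMono hsn) (eFsel_strictMono hsn)
  haveI : Invertible (A.submatrix (eFsel s n hsn) (eFsel s n hsn)) :=
    Matrix.invertibleOfIsUnitDet _ (isUnit_iff_ne_zero.mpr hd.ne')
  have key : ∀ (l : ℕ), l ≤ 4 → ∀ (r c : Fin l → Fin 4), StrictMono r → StrictMono c →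
      0 < ((schurMat s n hsn A).submatrix r c).det := by
    intro l hl r c hr hc
    have hpos := h (s + l) (by omega) (rowSel s n l hsn r) (rowSel s n l hsn c)
      (rowSel_strictMono hsn hr) (rowSel_strictMono hsn hc)
    rw [det_rowSel hsn A r c] at hpos
    rcases mul_pos_iff.mp hpos with ⟨_, h2⟩ | ⟨h1, _⟩
    · exact h2
    · linarith
  have hG00 : 0 < schurMat s n hsn A 0 0 := by
    have := key 1 (by omega) ![0] ![0]
      (fun a b hab => absurd hab (by simp [Subsingleton.elim a b]))
      (fun a b hab => absurd hab (by simp [Subsingleton.elim a b]))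
    rw [Matrix.det_fin_one] at this
    simpa using this
  have hG01 : 0 < schurMat s n hsn A 0 1 := by
    have := key 1 (by omega) ![0] ![1]
      (fun a b hab => absurd hab (by simp [Subsingleton.elim a b]))
      (fun a b hab => absurd hab (by simp [Subsingleton.elim a b]))
    rw [Matrix.det_fin_one] at this
    simpa using this
  have hdetG : 0 < (schurMat s n hsn A).det := by
    have := key 4 le_rfl id id strictMono_id strictMono_id
    simpa using this
  have hcomp := hC 3 le_rfl
    (fun a : Fin 3 =>
      (⟨rowSel s n 2 hsn (Pv a), rowSel_strictMono hsn (PvMono a)⟩ : STuple n (s + 2)))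
    (fun a : Fin 3 =>
      (⟨rowSel s n 2 hsn (Qv a), rowSel_strictMono hsn (QvMono a)⟩ : STuple n (s + 2)))
    (by
      intro a b hab
      fin_cases a <;> fin_cases b
      · exact absurd hab (by decide)
      · exact lex_lt_last (r := Pv 0) (c := Pv 1) hsn (by decide) (by decide)
      · exact lex_lt_last (r := Pv 0) (c := Pv 2) hsn (by decide) (by decide)
      · exact absurd hab (by decide)
      · exact absurd hab (by decide)
      · exact lex_lt_last (r := Pv 1) (c := Pv 2) hsn (by decide) (by decide)
      · exact absurd hab (by decide)
      · exact absurd hab (by decide)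
      · exact absurd hab (by decide))
    (by
      intro a b hab
      fin_cases a <;> fin_cases b
      · exact absurd hab (by decide)
      · exact lex_lt_last (r := Qv 0) (c := Qv 1) hsn (by decide) (by decide)
      · exact lex_lt_first (r := Qv 0) (c := Qv 2) hsn (by decide)
      · exact absurd hab (by decide)
      · exact absurd hab (by decide)
      · exact lex_lt_first (r := Qv 1) (c := Qv 2) hsn (by decide)
      · exact absurd hab (by decide)
      · exact absurd hab (by decide)
      · exact absurd hab (by decide))
  have heq : (compound A (s + 2)).submatrix
        (fun a : Fin 3 =>
          (⟨rowSel s n 2 hsn (Pv a), rowSel_strictMono hsn (PvMono a)⟩ : STuple n (s + 2)))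
        (fun a : Fin 3 =>
          (⟨rowSel s n 2 hsn (Qv a), rowSel_strictMono hsn (QvMono a)⟩ : STuple n (s + 2))) =
      (A.submatrix (eFsel s n hsn) (eFsel s n hsn)).det •
        Matrix.of (fun a b : Fin 3 => ((schurMat s n hsn A).submatrix (Pv a) (Qv b)).det) := by
    ext a b
    have := det_rowSel (l := 2) hsn A (Pv a) (Qv b)
    simpa [compound, Matrix.submatrix_apply, Matrix.smul_apply, smul_eq_mul] using this
  rw [heq, Matrix.det_smul, fix4] at hcomp
  have hprod : 0 < schurMat s n hsn A 0 0 * schurMat s n hsn A 0 1 * (schurMat s n hsn A).det :=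
    mul_pos (mul_pos hG00 hG01) hdetG
  have hcube : 0 < (A.submatrix (eFsel s n hsn) (eFsel s n hsn)).det ^ Fintype.card (Fin 3) :=
    pow_pos hd _
  nlinarith [hcomp, hprod, hcube]
end
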